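/- arXiv:2112.11645 — 5 statements merged into one kernel-verified Lean document; each statement's English description precedes it below -/
import Mathlib

section
/- Let D ⊆ ℝ³ be a bounded Lebesgue-measurable set of positive measure, ω a unit vector, and 1 ≤ p < ∞. If D is p-regular with respect to ω, then lim_{τ→∞} ‖v₀‖_{L¹(D)} / ‖v₀‖_{L²(D)} = 0, where v₀(x) = e^{τ x·ω}. -/
open MeasureTheory Filter
open scoped ENNReal RealInnerProductSpace

open scoped NNReal

lemma my_cs {α : Type*} [MeasurableSpace α] (μ : Measure α) [IsFiniteMeasure μ]
    (f : α → ℝ) (hm : AEStronglyMeasurable f μ) (hnn : ∀ x, 0 ≤ f x)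
    (hint2 : Integrable (fun x => f x ^ 2) μ) :
    ∫ x, f x ∂μ ≤ Real.sqrt ((μ Set.univ).toReal) * Real.sqrt (∫ x, f x ^ 2 ∂μ) := by
  have hmm : AEMeasurable (fun x => ENNReal.ofReal (f x)) μ :=
    ENNReal.measurable_ofReal.comp_aemeasurable hm.aemeasurable
  have hpq : Real.HolderConjugate 2 2 := by
    rw [Real.holderConjugate_iff]; norm_num
  have hH := ENNReal.lintegral_mul_le_Lp_mul_Lq μ hpq hmm (aemeasurable_const (b := (1:ENNReal)))
  simp only [Pi.mul_apply, mul_one, ENNReal.one_rpow, lintegral_one] at hH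
  have h2 : ∀ x, (ENNReal.ofReal (f x)) ^ (2:ℝ) = ENNReal.ofReal (f x ^ 2) := by
    intro x
    rw [ENNReal.ofReal_rpow_of_nonneg (hnn x) (by norm_num)]
    norm_num [Real.rpow_natCast]
  simp only [h2] at hH
  have hfin2 : (∫⁻ x, ENNReal.ofReal (f x ^ 2) ∂μ) ≠ ⊤ := hint2.lintegral_lt_top.ne
  have hfinU : (μ Set.univ) ≠ ⊤ := (measure_lt_top μ _).ne
  have hRHSfin : (∫⁻ x, ENNReal.ofReal (f x ^ 2) ∂μ) ^ (1/2:ℝ) * (μ Set.univ) ^ (1/2:ℝ) ≠ ⊤ :=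
    ENNReal.mul_ne_top (ENNReal.rpow_ne_top_of_nonneg (by norm_num) hfin2)
      (ENNReal.rpow_ne_top_of_nonneg (by norm_num) hfinU)
  have e1 : ∫ x, f x ∂μ = (∫⁻ x, ENNReal.ofReal (f x) ∂μ).toReal :=
    integral_eq_lintegral_of_nonneg_ae (Filter.Eventually.of_forall hnn) hm
  have e2 : ∫ x, f x ^ 2 ∂μ = (∫⁻ x, ENNReal.ofReal (f x ^ 2) ∂μ).toReal :=
    integral_eq_lintegral_of_nonneg_ae (Filter.Eventually.of_forall fun x => sq_nonneg _)
      (hm.pow 2)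
  rw [e1, e2]
  calc (∫⁻ x, ENNReal.ofReal (f x) ∂μ).toReal
      ≤ ((∫⁻ x, ENNReal.ofReal (f x ^ 2) ∂μ) ^ (1/2:ℝ) * (μ Set.univ) ^ (1/2:ℝ)).toReal :=
        ENNReal.toReal_mono hRHSfin hH
    _ = Real.sqrt ((μ Set.univ).toReal) * Real.sqrt ((∫⁻ x, ENNReal.ofReal (f x ^ 2) ∂μ).toReal) := by
        rw [ENNReal.toReal_mul, ← ENNReal.toReal_rpow, ← ENNReal.toReal_rpow,
          ← Real.sqrt_eq_rpow, ← Real.sqrt_eq_rpow]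
        ring

lemma exists_coord (ω : EuclideanSpace ℝ (Fin 3)) (hω : ‖ω‖ = 1) :
    ∃ Φ : EuclideanSpace ℝ (Fin 3) ≃ᵐ ℝ × (Fin 2 → ℝ),
      MeasurePreserving Φ volume volume ∧
      (∀ x, (Φ x).1 = ⟪x, ω⟫) ∧
      ∀ (A : Set (EuclideanSpace ℝ (Fin 3))) (t : ℝ),
        μH[(2:ℝ)] (A ∩ {x | ⟪x, ω⟫ = t}) ≤ 2 * volume {y : Fin 2 → ℝ | Φ.symm (t, y) ∈ A} := by
  have hcard : Module.finrank ℝ (EuclideanSpace ℝ (Fin 3)) = Fintype.card (Fin 3) := by simp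
  have horth : Orthonormal ℝ (Set.restrict {0} (fun _ : Fin 3 => ω)) := by
    constructor
    · intro i; exact hω
    · intro i j hij
      exact absurd (Subtype.ext (by
        have hi := i.2; have hj := j.2
        simp only [Set.mem_singleton_iff] at hi hj
        rw [hi, hj])) hij
  obtain ⟨b, hb⟩ := horth.exists_orthonormalBasis_extension_of_card_eq hcard
  have hb0 : b 0 = ω := hb 0 rfl
  set e₁ : EuclideanSpace ℝ (Fin 3) ≃ᵐ EuclideanSpace ℝ (Fin 3) :=
    b.repr.toHomeomorph.toMeasurableEquiv with he₁
  set e₂ := (MeasurableEquiv.toLp 2 (Fin 3 → ℝ)).symm with he₂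
  set e₃ := MeasurableEquiv.piFinSuccAbove (fun _ : Fin 3 => ℝ) 0 with he₃
  have hfst : ∀ x, (((e₁.trans e₂).trans e₃) x).1 = ⟪x, ω⟫ := by
    intro x
    show (e₃ (e₂ (b.repr x))).1 = ⟪x, ω⟫
    rw [he₃]
    simp [MeasurableEquiv.piFinSuccAbove_apply, he₂, MeasurableEquiv.coe_toLp,
      b.repr_apply_apply, hb0, real_inner_comm, mul_comm]
  refine ⟨(e₁.trans e₂).trans e₃, ?_, hfst, ?_⟩
  · exact (volume_preserving_piFinSuccAbove (fun _ : Fin 3 => ℝ) 0).comp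
      ((EuclideanSpace.volume_preserving_symm_measurableEquiv_toLp (Fin 3)).comp
        b.measurePreserving_repr)
  · intro A t
    set φ : (Fin 2 → ℝ) → EuclideanSpace ℝ (Fin 3) :=
      fun y => ((e₁.trans e₂).trans e₃).symm (t, y) with hφ
    have hφeq : ∀ y, φ y = b.repr.symm (e₂.symm (e₃.symm (t, y))) := fun y => rfl
    set K : ℝ≥0 := ⟨Real.sqrt 2, Real.sqrt_nonneg 2⟩ with hKdef
    have hK : LipschitzWith K φ := by
      apply LipschitzWith.of_dist_le_mul
      intro y y'
      rw [hφeq, hφeq]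
      rw [b.repr.symm.dist_map]
      rw [EuclideanSpace.dist_eq]
      have hcoord : ∀ (u : Fin 3 → ℝ) (i : Fin 3), (e₂.symm u : EuclideanSpace ℝ (Fin 3)) i = u i :=
        fun u i => rfl
      simp only [hcoord]
      have hins : ∀ (y : Fin 2 → ℝ), (e₃.symm (t, y) : Fin 3 → ℝ) = Fin.insertNth 0 t y := by
        intro y
        rw [he₃, MeasurableEquiv.piFinSuccAbove_symm_apply]
        rfl
      rw [hins, hins]
      set u : Fin 3 → ℝ := Fin.insertNth 0 t y with hu
      set u' : Fin 3 → ℝ := Fin.insertNth 0 t y' with hu'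
      have hsum := Fin.sum_univ_succAbove (fun i => dist (u i) (u' i) ^ 2) 0
      rw [hsum]
      have h00 : dist (u 0) (u' 0) = 0 := by
        rw [hu, hu']
        simp [Fin.insertNth_apply_same]
      have hsa : ∀ j : Fin 2, dist (u ((0 : Fin 3).succAbove j)) (u' ((0 : Fin 3).succAbove j))
          = dist (y j) (y' j) := by
        intro j
        rw [hu, hu']
        simp [Fin.insertNth_apply_succAbove]
      simp only [h00, hsa]
      have hsumle : ∑ j : Fin 2, dist (y j) (y' j) ^ 2 ≤ 2 * dist y y' ^ 2 := by
        have : ∀ j : Fin 2, dist (y j) (y' j) ^ 2 ≤ dist y y' ^ 2 := fun j =>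
          pow_le_pow_left₀ dist_nonneg (dist_le_pi_dist y y' j) 2
        calc ∑ j : Fin 2, dist (y j) (y' j) ^ 2 ≤ ∑ _j : Fin 2, dist y y' ^ 2 :=
              Finset.sum_le_sum fun j _ => this j
          _ = 2 * dist y y' ^ 2 := by rw [Fin.sum_univ_two]; ring
      calc Real.sqrt (0 ^ 2 + ∑ j : Fin 2, dist (y j) (y' j) ^ 2)
          ≤ Real.sqrt (2 * dist y y' ^ 2) := by
            apply Real.sqrt_le_sqrt; simpa using hsumle
        _ = Real.sqrt 2 * dist y y' := by
            rw [Real.sqrt_mul (by norm_num), Real.sqrt_sq dist_nonneg]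
    have himg : A ∩ {x | ⟪x, ω⟫ = t} = φ '' (φ ⁻¹' A) := by
      ext x
      constructor
      · rintro ⟨hxA, hxt⟩
        have hxt' : ⟪x, ω⟫ = t := hxt
        have hxeq : φ ((((e₁.trans e₂).trans e₃) x).2) = x := by
          show ((e₁.trans e₂).trans e₃).symm (t, (((e₁.trans e₂).trans e₃) x).2) = x
          have h2 : (t, (((e₁.trans e₂).trans e₃) x).2) = ((e₁.trans e₂).trans e₃) x := by
            rw [← hxt', ← hfst x]
          rw [h2, MeasurableEquiv.symm_apply_apply]
        exact ⟨(((e₁.trans e₂).trans e₃) x).2, by rw [Set.mem_preimage, hxeq]; exact hxA, hxeq⟩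
      · rintro ⟨y, hyA, rfl⟩
        refine ⟨hyA, ?_⟩
        show ⟪φ y, ω⟫ = t
        rw [← hfst (φ y)]
        show ((((e₁.trans e₂).trans e₃) (((e₁.trans e₂).trans e₃).symm (t, y)))).1 = t
        rw [MeasurableEquiv.apply_symm_apply]
    have hpi : (μH[(2:ℝ)] : Measure (Fin 2 → ℝ)) = volume := by
      have h := MeasureTheory.hausdorffMeasure_pi_real (ι := Fin 2)
      simpa using h
    have hK2 : (ENNReal.ofNNReal K) ^ (2:ℝ) = 2 := by
      rw [← ENNReal.coe_rpow_of_nonneg _ (by norm_num)]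
      have : K ^ (2:ℝ) = 2 := by
        apply NNReal.coe_injective
        rw [NNReal.coe_rpow]
        show Real.sqrt 2 ^ (2:ℝ) = ((2:ℝ≥0):ℝ)
        rw [show (2:ℝ) = ((2:ℕ):ℝ) by norm_num, Real.rpow_natCast]
        push_cast
        rw [Real.sq_sqrt (by norm_num : (0:ℝ) ≤ 2)]
      rw [this]
      norm_num
    calc μH[(2:ℝ)] (A ∩ {x | ⟪x, ω⟫ = t}) = μH[(2:ℝ)] (φ '' (φ ⁻¹' A)) := by rw [himg]
      _ ≤ (ENNReal.ofNNReal K) ^ (2:ℝ) * μH[(2:ℝ)] (φ ⁻¹' A) :=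
          hK.hausdorffMeasure_image_le (by norm_num) _
      _ = 2 * volume {y : Fin 2 → ℝ | ((e₁.trans e₂).trans e₃).symm (t, y) ∈ A} := by
          rw [hK2, hpi]; rfl

/-- If a bounded measurable set `D ⊆ ℝ³` of positive measure is `p`-regular with respect to a
unit vector `ω`, then `‖v₀‖_{L¹(D)} / ‖v₀‖_{L²(D)} → 0` as `τ → ∞`, where `v₀ x = exp (τ x·ω)`.
Here `hval = h_D(ω)` is the support function and the slice measure `μ₂` is realized as the
two-dimensional Hausdorff measure `μH[2]` on the plane `{x : ⟪x,ω⟫ = h_D(ω) - s}`. -/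
theorem stmt_0
    (D : Set (EuclideanSpace ℝ (Fin 3))) (hDmeas : MeasurableSet D)
    (hDbdd : Bornology.IsBounded D) (hDpos : 0 < volume D)
    (ω : EuclideanSpace ℝ (Fin 3)) (hω : ‖ω‖ = 1)
    (p : ℝ) (hp : 1 ≤ p)
    (hval : ℝ) (hvaldef : hval = sSup ((fun x => ⟪x, ω⟫) '' D))
    (hreg : ∃ C > (0:ℝ), ∃ δ > (0:ℝ),
      ∀ᵐ s ∂(volume.restrict (Set.Ioo (0:ℝ) δ)),
        ENNReal.ofReal (C * s ^ (p - 1)) ≤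
          μH[2] (D ∩ {x | ⟪x, ω⟫ = hval - s})) :
    Tendsto (fun τ : ℝ =>
        (∫ x in D, Real.exp (τ * ⟪x, ω⟫)) /
          Real.sqrt (∫ x in D, Real.exp (2 * τ * ⟪x, ω⟫)))
      atTop (nhds 0) := by
  obtain ⟨C, hC, δ, hδ, hae⟩ := hreg
  obtain ⟨Φ, hΦ, hfst, hslice⟩ := exists_coord ω hω
  have hcont : Continuous fun x : EuclideanSpace ℝ (Fin 3) => ⟪x, ω⟫ :=
    continuous_id.inner continuous_const
  have hDfin : volume D < ⊤ := hDbdd.measure_lt_top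
  obtain ⟨R, hR⟩ : ∃ R, ∀ x ∈ D, ‖x‖ ≤ R := isBounded_iff_forall_norm_le.mp hDbdd
  have hgle : ∀ x ∈ D, ⟪x, ω⟫ ≤ hval := by
    intro x hx
    rw [hvaldef]
    refine le_csSup ⟨R, ?_⟩ (Set.mem_image_of_mem _ hx)
    rintro _ ⟨z, hz, rfl⟩
    calc ⟪z, ω⟫ ≤ |⟪z, ω⟫| := le_abs_self _
      _ ≤ ‖z‖ * ‖ω‖ := abs_real_inner_le_norm z ω
      _ ≤ R := by rw [hω, mul_one]; exact hR z hz
  have hint : ∀ c : ℝ, IntegrableOn (fun x => Real.exp (c * ⟪x, ω⟫)) D volume := by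
    intro c
    refine Integrable.mono'
      (integrableOn_const hDfin.ne :
        IntegrableOn (fun _ => Real.exp (|c| * R)) D volume)
      ((Real.continuous_exp.comp (continuous_const.mul hcont)).aestronglyMeasurable) ?_
    rw [ae_restrict_iff' hDmeas]
    refine Filter.Eventually.of_forall fun x hx => ?_
    rw [Real.norm_of_nonneg (Real.exp_nonneg _)]
    apply Real.exp_le_exp.2
    calc c * ⟪x, ω⟫ ≤ |c * ⟪x, ω⟫| := le_abs_self _
      _ = |c| * |⟪x, ω⟫| := abs_mul _ _
      _ ≤ |c| * R := by
          refine mul_le_mul_of_nonneg_left ?_ (abs_nonneg c)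
          calc |⟪x, ω⟫| ≤ ‖x‖ * ‖ω‖ := abs_real_inner_le_norm x ω
            _ ≤ R := by rw [hω, mul_one]; exact hR x hx
  have hmeasω : ∀ c : ℝ, MeasurableSet {x : EuclideanSpace ℝ (Fin 3) | c < ⟪x, ω⟫} :=
    fun c => measurableSet_lt measurable_const hcont.measurable
  have hplane : volume {x : EuclideanSpace ℝ (Fin 3) | ⟪x, ω⟫ = hval} = 0 := by
    have heq : {x : EuclideanSpace ℝ (Fin 3) | ⟪x, ω⟫ = hval}
        = Φ ⁻¹' ({hval} ×ˢ (Set.univ : Set (Fin 2 → ℝ))) := by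
      ext x
      simp only [Set.mem_setOf_eq, Set.mem_preimage, Set.mem_prod, Set.mem_singleton_iff,
        Set.mem_univ, and_true, hfst x]
    rw [heq, hΦ.measure_preimage
      (((measurableSet_singleton hval).prod MeasurableSet.univ).nullMeasurableSet)]
    rw [Measure.volume_eq_prod, Measure.prod_prod]
    simp
  -- key denominator lower bound (in lintegral form)
  have key : ∀ b : ℝ, 0 < b → b ≤ δ → ∀ τ : ℝ, 0 ≤ τ →
      ENNReal.ofReal (Real.exp (2*τ*(hval - b)) * (C * (b/2) ^ (p-1) / 2) * (b/2)) ≤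
        ∫⁻ x in D, ENNReal.ofReal (Real.exp (2 * τ * ⟪x, ω⟫)) := by
    intro b hb hbδ τ hτ
    set S : Set (ℝ × (Fin 2 → ℝ)) := Φ.symm ⁻¹' D with hS
    have hSmeas : MeasurableSet S := Φ.symm.measurable hDmeas
    set G : ℝ × (Fin 2 → ℝ) → ℝ≥0∞ :=
      S.indicator (fun z => ENNReal.ofReal (Real.exp (2 * τ * z.1))) with hG
    have hGmeas : Measurable G := by
      apply Measurable.indicator _ hSmeas
      exact (ENNReal.measurable_ofReal.comp
        (Real.measurable_exp.comp ((measurable_const.mul measurable_fst))))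
    have step1 : ∫⁻ x in D, ENNReal.ofReal (Real.exp (2 * τ * ⟪x, ω⟫))
        = ∫⁻ z, G z := by
      rw [← lintegral_indicator hDmeas, ← hΦ.lintegral_comp hGmeas]
      congr 1
      funext x
      by_cases hx : x ∈ D
      · have hxS : Φ x ∈ S := by
          rw [hS, Set.mem_preimage, MeasurableEquiv.symm_apply_apply]; exact hx
        rw [Set.indicator_of_mem hx, hG, Set.indicator_of_mem hxS, hfst x]
      · have hxS : Φ x ∉ S := by
          rw [hS, Set.mem_preimage, MeasurableEquiv.symm_apply_apply]; exact hx
        rw [Set.indicator_of_notMem hx, hG, Set.indicator_of_notMem hxS]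
    have step2 : ∫⁻ z, G z = ∫⁻ t : ℝ, ∫⁻ y : Fin 2 → ℝ, G (t, y) := by
      rw [Measure.volume_eq_prod, lintegral_prod _ hGmeas.aemeasurable]
    have step3 : ∀ t : ℝ, (∫⁻ y : Fin 2 → ℝ, G (t, y))
        = ENNReal.ofReal (Real.exp (2 * τ * t)) * volume {y : Fin 2 → ℝ | Φ.symm (t, y) ∈ D} := by
      intro t
      have hTmeas : MeasurableSet {y : Fin 2 → ℝ | Φ.symm (t, y) ∈ D} := by
        have : {y : Fin 2 → ℝ | Φ.symm (t, y) ∈ D} = Prod.mk t ⁻¹' S := rfl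
        rw [this]
        exact measurable_prodMk_left hSmeas
      have hpt : ∀ y, G (t, y) = Set.indicator {y : Fin 2 → ℝ | Φ.symm (t, y) ∈ D}
          (fun _ => ENNReal.ofReal (Real.exp (2 * τ * t))) y := by
        intro y
        by_cases hy : Φ.symm (t, y) ∈ D
        · rw [hG, Set.indicator_of_mem (by exact hy : (t,y) ∈ S),
            Set.indicator_of_mem (by exact hy)]
        · rw [hG, Set.indicator_of_notMem (by exact hy : (t,y) ∉ S),
            Set.indicator_of_notMem (by exact hy)]
      simp only [hpt]
      rw [lintegral_indicator hTmeas, setLIntegral_const]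
    -- a.e. slice lower bound on the relevant interval
    have haet : ∀ᵐ t ∂(volume.restrict (Set.Ioo (hval - b) (hval - b/2))),
        ENNReal.ofReal (Real.exp (2*τ*(hval - b)) * (C * (b/2) ^ (p-1) / 2)) ≤
          ENNReal.ofReal (Real.exp (2 * τ * t)) * volume {y : Fin 2 → ℝ | Φ.symm (t, y) ∈ D} := by
      have hnull : volume ({s : ℝ | ¬ (ENNReal.ofReal (C * s ^ (p-1)) ≤
          μH[2] (D ∩ {x | ⟪x, ω⟫ = hval - s}))} ∩ Set.Ioo (0:ℝ) δ) = 0 := by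
        have h := ae_iff.mp hae
        rwa [Measure.restrict_apply' measurableSet_Ioo] at h
      have hmp : MeasurePreserving (fun t : ℝ => hval - t) volume volume :=
        Measure.measurePreserving_sub_left volume hval
      have hnull2 : volume ((fun t : ℝ => hval - t) ⁻¹'
          ({s : ℝ | ¬ (ENNReal.ofReal (C * s ^ (p-1)) ≤
            μH[2] (D ∩ {x | ⟪x, ω⟫ = hval - s}))} ∩ Set.Ioo (0:ℝ) δ)) = 0 :=
        hmp.quasiMeasurePreserving.preimage_null hnull
      have hae2 : ∀ᵐ t ∂(volume : Measure ℝ), hval - t ∈ Set.Ioo (0:ℝ) δ →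
          ENNReal.ofReal (C * (hval - t) ^ (p-1)) ≤
            μH[2] (D ∩ {x | ⟪x, ω⟫ = hval - (hval - t)}) := by
        rw [ae_iff]
        refine measure_mono_null ?_ hnull2
        intro t ht
        simp only [Set.mem_setOf_eq, Classical.not_imp] at ht
        exact ⟨ht.2, ht.1⟩
      refine ((ae_restrict_of_ae hae2).and (ae_restrict_mem measurableSet_Ioo)).mono ?_
      rintro t ⟨hP, ht1, ht2⟩
      have hs1 : b/2 < hval - t := by linarith
      have hs2 : hval - t < b := by linarith
      have hP' := hP ⟨by linarith, by linarith⟩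
      have hP'' : ENNReal.ofReal (C * (hval - t) ^ (p-1)) ≤
          μH[2] (D ∩ {x | ⟪x, ω⟫ = t}) := by
        have hh : hval - (hval - t) = t := by ring
        rwa [hh] at hP'
      have h1 : ENNReal.ofReal (C * (b/2) ^ (p-1)) ≤
          2 * volume {y : Fin 2 → ℝ | Φ.symm (t, y) ∈ D} := by
        refine le_trans (ENNReal.ofReal_le_ofReal ?_) (le_trans hP'' (hslice D t))
        exact mul_le_mul_of_nonneg_left
          (Real.rpow_le_rpow (by linarith) hs1.le (by linarith)) hC.le
      have hv : ENNReal.ofReal (C * (b/2) ^ (p-1) / 2) ≤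
          volume {y : Fin 2 → ℝ | Φ.symm (t, y) ∈ D} := by
        rw [ENNReal.ofReal_div_of_pos (by norm_num), ENNReal.ofReal_ofNat,
          ENNReal.div_le_iff (by norm_num) (by norm_num)]
        rw [mul_comm (volume _) 2]
        exact le_trans (ENNReal.ofReal_le_ofReal (le_of_eq (by ring))) h1
      calc ENNReal.ofReal (Real.exp (2*τ*(hval - b)) * (C * (b/2) ^ (p-1) / 2))
          = ENNReal.ofReal (Real.exp (2*τ*(hval - b))) *
              ENNReal.ofReal (C * (b/2) ^ (p-1) / 2) :=
            ENNReal.ofReal_mul (Real.exp_nonneg _)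
        _ ≤ ENNReal.ofReal (Real.exp (2 * τ * t)) *
              volume {y : Fin 2 → ℝ | Φ.symm (t, y) ∈ D} := by
            refine mul_le_mul' (ENNReal.ofReal_le_ofReal (Real.exp_le_exp.2 ?_)) hv
            exact mul_le_mul_of_nonneg_left (by linarith) (by linarith)
    calc ENNReal.ofReal (Real.exp (2*τ*(hval - b)) * (C * (b/2) ^ (p-1) / 2) * (b/2))
        = ENNReal.ofReal (Real.exp (2*τ*(hval - b)) * (C * (b/2) ^ (p-1) / 2)) *
            volume (Set.Ioo (hval - b) (hval - b/2)) := by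
          rw [Real.volume_Ioo, show hval - b/2 - (hval - b) = b/2 by ring,
            ← ENNReal.ofReal_mul (by positivity)]
      _ = ∫⁻ t in Set.Ioo (hval - b) (hval - b/2),
            ENNReal.ofReal (Real.exp (2*τ*(hval - b)) * (C * (b/2) ^ (p-1) / 2)) := by
          rw [setLIntegral_const]
      _ ≤ ∫⁻ t in Set.Ioo (hval - b) (hval - b/2),
            ENNReal.ofReal (Real.exp (2 * τ * t)) * volume {y : Fin 2 → ℝ | Φ.symm (t, y) ∈ D} :=
          lintegral_mono_ae haet
      _ ≤ ∫⁻ t : ℝ, ENNReal.ofReal (Real.exp (2 * τ * t)) *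
            volume {y : Fin 2 → ℝ | Φ.symm (t, y) ∈ D} :=
          setLIntegral_le_lintegral _ _
      _ = ∫⁻ x in D, ENNReal.ofReal (Real.exp (2 * τ * ⟪x, ω⟫)) := by
          rw [step1, step2]; exact (lintegral_congr step3).symm
  have key' : ∀ b : ℝ, 0 < b → b ≤ δ → ∀ τ : ℝ, 0 ≤ τ →
      Real.exp (2*τ*(hval - b)) * (C * (b/2) ^ (p-1) / 2) * (b/2) ≤
        ∫ x in D, Real.exp (2 * τ * ⟪x, ω⟫) := by
    intro b hb hbδ τ hτ
    have hi := hint (2*τ)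
    have heq : ∫ x in D, Real.exp (2 * τ * ⟪x, ω⟫)
        = (∫⁻ x in D, ENNReal.ofReal (Real.exp (2 * τ * ⟪x, ω⟫))).toReal :=
      integral_eq_lintegral_of_nonneg_ae (Filter.Eventually.of_forall fun x => Real.exp_nonneg _)
        ((Real.continuous_exp.comp (continuous_const.mul hcont)).aestronglyMeasurable.restrict)
    rw [heq]
    exact (ENNReal.ofReal_le_iff_le_toReal hi.lintegral_lt_top.ne).1 (key b hb hbδ τ hτ)
  have hsqfun : ∀ τ : ℝ, (fun x : EuclideanSpace ℝ (Fin 3) => Real.exp (τ * ⟪x, ω⟫) ^ 2)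
      = fun x => Real.exp (2 * τ * ⟪x, ω⟫) := by
    intro τ
    funext x
    rw [sq, ← Real.exp_add]
    congr 1
    ring
  have hnum : ∀ η : ℝ, 0 < η → ∀ τ : ℝ, 0 ≤ τ →
      (∫ x in D, Real.exp (τ * ⟪x, ω⟫)) ≤
        Real.exp (τ * (hval - η)) * (volume D).toReal +
          Real.sqrt ((volume (D ∩ {x | hval - η < ⟪x, ω⟫})).toReal) *
            Real.sqrt (∫ x in D, Real.exp (2 * τ * ⟪x, ω⟫)) := by
    intro η hη τ hτ
    set A := D ∩ {x | hval - η < ⟪x, ω⟫} with hA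
    set B := D ∩ {x | ⟪x, ω⟫ ≤ hval - η} with hB
    have hAmeas : MeasurableSet A := hDmeas.inter (hmeasω _)
    have hDsplit : D = B ∪ A := by
      ext x
      simp only [hA, hB, Set.mem_union, Set.mem_inter_iff, Set.mem_setOf_eq]
      constructor
      · intro hx
        rcases le_or_gt ⟪x, ω⟫ (hval - η) with h | h
        · exact Or.inl ⟨hx, h⟩
        · exact Or.inr ⟨hx, h⟩
      · rintro (⟨hx, _⟩ | ⟨hx, _⟩) <;> exact hx
    have hdisj : Disjoint B A := by
      rw [Set.disjoint_left]
      rintro x ⟨_, h1⟩ ⟨_, h2⟩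
      simp only [Set.mem_setOf_eq] at h1 h2
      linarith
    have hiB : IntegrableOn (fun x => Real.exp (τ * ⟪x, ω⟫)) B volume :=
      (hint τ).mono_set Set.inter_subset_left
    have hiA : IntegrableOn (fun x => Real.exp (τ * ⟪x, ω⟫)) A volume :=
      (hint τ).mono_set Set.inter_subset_left
    have hsplit : (∫ x in D, Real.exp (τ * ⟪x, ω⟫))
        = (∫ x in B, Real.exp (τ * ⟪x, ω⟫)) + ∫ x in A, Real.exp (τ * ⟪x, ω⟫) := by
      rw [hDsplit]
      exact setIntegral_union hdisj hAmeas hiB hiA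
    have hvolB : volume B < ⊤ := lt_of_le_of_lt (measure_mono Set.inter_subset_left) hDfin
    have hvolA : volume A < ⊤ := lt_of_le_of_lt (measure_mono Set.inter_subset_left) hDfin
    have hBle : (∫ x in B, Real.exp (τ * ⟪x, ω⟫)) ≤ Real.exp (τ * (hval - η)) * (volume D).toReal := by
      have hb := norm_setIntegral_le_of_norm_le_const (μ := volume) (s := B)
        (C := Real.exp (τ * (hval - η)))
        (f := fun x => Real.exp (τ * ⟪x, ω⟫)) hvolB ?_
      · refine le_trans (le_trans (Real.le_norm_self _) hb) ?_
        exact mul_le_mul_of_nonneg_left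
          (ENNReal.toReal_mono hDfin.ne (measure_mono Set.inter_subset_left))
          (Real.exp_nonneg _)
      · intro x hx
        rw [Real.norm_of_nonneg (Real.exp_nonneg _)]
        exact Real.exp_le_exp.2 (mul_le_mul_of_nonneg_left hx.2 hτ)
    have hAle : (∫ x in A, Real.exp (τ * ⟪x, ω⟫)) ≤
        Real.sqrt ((volume A).toReal) * Real.sqrt (∫ x in D, Real.exp (2 * τ * ⟪x, ω⟫)) := by
      haveI : IsFiniteMeasure (volume.restrict A) := by
        constructor
        rw [Measure.restrict_apply_univ]
        exact hvolA
      have hint2 : Integrable (fun x => Real.exp (τ * ⟪x, ω⟫) ^ 2) (volume.restrict A) := by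
        rw [hsqfun τ]
        exact (hint (2*τ)).mono_set Set.inter_subset_left
      have hcs := my_cs (volume.restrict A) (fun x => Real.exp (τ * ⟪x, ω⟫))
        (Real.continuous_exp.comp (continuous_const.mul hcont)).aestronglyMeasurable.restrict
        (fun x => Real.exp_nonneg _) hint2
      rw [Measure.restrict_apply_univ] at hcs
      refine le_trans hcs ?_
      refine mul_le_mul_of_nonneg_left (Real.sqrt_le_sqrt ?_) (Real.sqrt_nonneg _)
      have h2 : (∫ x in A, Real.exp (τ * ⟪x, ω⟫) ^ 2) = ∫ x in A, Real.exp (2 * τ * ⟪x, ω⟫) := by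
        rw [hsqfun τ]
      rw [h2]
      refine setIntegral_mono_set (hint (2*τ)) ?_ ?_
      · exact Filter.Eventually.of_forall fun x => Real.exp_nonneg _
      · exact (Set.inter_subset_left (t := {x | hval - η < ⟪x, ω⟫})).eventuallyLE
    calc (∫ x in D, Real.exp (τ * ⟪x, ω⟫))
        = (∫ x in B, Real.exp (τ * ⟪x, ω⟫)) + ∫ x in A, Real.exp (τ * ⟪x, ω⟫) := hsplit
      _ ≤ Real.exp (τ * (hval - η)) * (volume D).toReal +
            Real.sqrt ((volume A).toReal) *
              Real.sqrt (∫ x in D, Real.exp (2 * τ * ⟪x, ω⟫)) := add_le_add hBle hAle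
  have htend0 : Filter.Tendsto (fun n : ℕ => volume (D ∩ {x | hval - 1/(n+1:ℝ) < ⟪x, ω⟫}))
      Filter.atTop (nhds 0) := by
    have hmeasn : ∀ n : ℕ, NullMeasurableSet (D ∩ {x | hval - 1/(n+1:ℝ) < ⟪x, ω⟫}) volume :=
      fun n => (hDmeas.inter (hmeasω _)).nullMeasurableSet
    have hanti : Antitone fun n : ℕ => D ∩ {x | hval - 1/(n+1:ℝ) < ⟪x, ω⟫} := by
      intro m n hmn
      apply Set.inter_subset_inter_right
      intro x hx
      simp only [Set.mem_setOf_eq] at *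
      have hc : ((m:ℝ)+1) ≤ (n:ℝ)+1 := by
        have := (Nat.cast_le (α := ℝ)).2 hmn
        linarith
      have h1 : (1:ℝ)/(n+1) ≤ 1/(m+1) := one_div_le_one_div_of_le (by positivity) hc
      linarith
    have hfin : ∃ n : ℕ, volume (D ∩ {x | hval - 1/(n+1:ℝ) < ⟪x, ω⟫}) ≠ ⊤ :=
      ⟨0, (lt_of_le_of_lt (measure_mono Set.inter_subset_left) hDfin).ne⟩
    have h := tendsto_measure_iInter_atTop hmeasn hanti hfin
    have hzero : volume (⋂ n : ℕ, D ∩ {x | hval - 1/(n+1:ℝ) < ⟪x, ω⟫}) = 0 := by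
      refine measure_mono_null ?_ hplane
      intro x hx
      simp only [Set.mem_iInter, Set.mem_inter_iff, Set.mem_setOf_eq] at hx ⊢
      have hxD := (hx 0).1
      have hge : hval ≤ ⟪x, ω⟫ := by
        by_contra hlt
        push_neg at hlt
        obtain ⟨n, hn⟩ := exists_nat_one_div_lt (show (0:ℝ) < hval - ⟪x, ω⟫ by linarith)
        have := (hx n).2
        linarith
      exact le_antisymm (hgle x hxD) hge
    rwa [hzero] at h
  rw [NormedAddCommGroup.tendsto_nhds_zero]
  intro ε hε
  obtain ⟨n, hn⟩ :=
    (htend0.eventually_lt_const (ENNReal.ofReal_pos.2 (show (0:ℝ) < (ε/2)^2 by positivity))).exists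
  set η := min (1/(n+1:ℝ)) δ with hηdef
  have hη0 : 0 < η := lt_min (by positivity) hδ
  have hηδ : η ≤ δ := min_le_right _ _
  have hηn : η ≤ 1/(n+1:ℝ) := min_le_left _ _
  set b := η/2 with hbdef
  have hb0 : 0 < b := by rw [hbdef]; linarith
  have hbδ : b ≤ δ := by rw [hbdef]; linarith
  set Kb := C * (b/2) ^ (p-1) / 2 * (b/2) with hKb
  have hKbpos : 0 < Kb := by
    rw [hKb]
    have h1 : (0:ℝ) < (b/2) ^ (p-1) := Real.rpow_pos_of_pos (by linarith) _
    have h2 : (0:ℝ) < C * (b/2) ^ (p-1) / 2 := by positivity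
    have h3 : (0:ℝ) < b/2 := by linarith
    positivity
  have hc1 : Filter.Tendsto
      (fun τ : ℝ => (volume D).toReal / Real.sqrt Kb * Real.exp (-(η/2) * τ))
      Filter.atTop (nhds 0) := by
    have hmul : Filter.Tendsto (fun τ : ℝ => (η/2) * τ) Filter.atTop Filter.atTop :=
      Filter.Tendsto.const_mul_atTop (by linarith) Filter.tendsto_id
    have h1 : Filter.Tendsto (fun τ : ℝ => -(η/2) * τ) Filter.atTop Filter.atBot := by
      have := Filter.tendsto_neg_atTop_atBot.comp hmul
      simpa [Function.comp_def, neg_mul] using this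
    have h2 := Real.tendsto_exp_atBot.comp h1
    have h3 : Filter.Tendsto (fun τ : ℝ => Real.exp (-(η/2) * τ)) Filter.atTop (nhds 0) := by
      simpa [Function.comp_def] using h2
    simpa using h3.const_mul ((volume D).toReal / Real.sqrt Kb)
  have hev1 := hc1.eventually_lt_const (show (0:ℝ) < ε/2 by linarith)
  filter_upwards [hev1, Filter.eventually_ge_atTop (0:ℝ)] with τ h1 hτ0
  set I1 := ∫ x in D, Real.exp (τ * ⟪x, ω⟫) with hI1
  set I2 := ∫ x in D, Real.exp (2 * τ * ⟪x, ω⟫) with hI2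
  have hI1nn : 0 ≤ I1 := setIntegral_nonneg hDmeas fun x _ => Real.exp_nonneg _
  have hI2low := key' b hb0 hbδ τ hτ0
  have hsqrtKb : 0 < Real.sqrt Kb := Real.sqrt_pos.2 hKbpos
  have hsqrt : Real.exp (τ*(hval-b)) * Real.sqrt Kb ≤ Real.sqrt I2 := by
    have hll : Real.exp (2*τ*(hval-b)) * Kb ≤ I2 := by
      rw [hKb, ← mul_assoc]
      exact hI2low
    have hmono := Real.sqrt_le_sqrt hll
    have hexp2 : Real.exp (2*τ*(hval-b)) = Real.exp (τ*(hval-b)) ^ 2 := by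
      rw [sq, ← Real.exp_add]
      congr 1
      ring
    rwa [Real.sqrt_mul (Real.exp_nonneg _), hexp2, Real.sqrt_sq (Real.exp_nonneg _)] at hmono
  have hspos : 0 < Real.sqrt I2 :=
    lt_of_lt_of_le (mul_pos (Real.exp_pos _) hsqrtKb) hsqrt
  have hnb := hnum η hη0 τ hτ0
  set A := D ∩ {x | hval - η < ⟪x, ω⟫} with hA
  have hAsub : A ⊆ D ∩ {x | hval - 1/(n+1:ℝ) < ⟪x, ω⟫} := by
    refine Set.inter_subset_inter_right _ fun x hx => ?_
    simp only [Set.mem_setOf_eq] at hx ⊢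
    linarith
  have hAlt : (volume A).toReal < (ε/2)^2 :=
    ENNReal.toReal_lt_of_lt_ofReal (lt_of_le_of_lt (measure_mono hAsub) hn)
  have hY : Real.sqrt ((volume A).toReal) < ε/2 := (Real.sqrt_lt' (by linarith)).2 hAlt
  show ‖I1 / Real.sqrt I2‖ < ε
  rw [Real.norm_of_nonneg (div_nonneg hI1nn (Real.sqrt_nonneg _))]
  have hstep : I1 / Real.sqrt I2 ≤
      Real.exp (τ * (hval - η)) * (volume D).toReal / Real.sqrt I2 +
        Real.sqrt ((volume A).toReal) := by
    have hd : I1 / Real.sqrt I2 ≤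
        (Real.exp (τ * (hval - η)) * (volume D).toReal +
          Real.sqrt ((volume A).toReal) * Real.sqrt I2) / Real.sqrt I2 :=
      (div_le_div_iff_of_pos_right hspos).2 hnb
    refine le_trans hd (le_of_eq ?_)
    rw [add_div, mul_div_cancel_right₀ _ hspos.ne']
  have hfirst : Real.exp (τ * (hval - η)) * (volume D).toReal / Real.sqrt I2 < ε/2 := by
    have hq : Real.exp (τ * (hval - η)) * (volume D).toReal / Real.sqrt I2 ≤
        Real.exp (τ * (hval - η)) * (volume D).toReal /
          (Real.exp (τ*(hval-b)) * Real.sqrt Kb) := by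
      apply div_le_div_of_nonneg_left
      · exact mul_nonneg (Real.exp_nonneg _) ENNReal.toReal_nonneg
      · exact mul_pos (Real.exp_pos _) hsqrtKb
      · exact hsqrt
    have hqq : Real.exp (τ * (hval - η)) * (volume D).toReal /
        (Real.exp (τ*(hval-b)) * Real.sqrt Kb)
        = (volume D).toReal / Real.sqrt Kb * Real.exp (-(η/2) * τ) := by
      have hxp : Real.exp (τ * (hval - η)) = Real.exp (τ*(hval-b)) * Real.exp (-(η/2) * τ) := by
        rw [← Real.exp_add]
        congr 1
        rw [hbdef]
        ring
      rw [hxp]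
      field_simp
    calc Real.exp (τ * (hval - η)) * (volume D).toReal / Real.sqrt I2
        ≤ (volume D).toReal / Real.sqrt Kb * Real.exp (-(η/2) * τ) := by rw [← hqq]; exact hq
      _ < ε/2 := h1
  calc I1 / Real.sqrt I2
      ≤ Real.exp (τ * (hval - η)) * (volume D).toReal / Real.sqrt I2 +
          Real.sqrt ((volume A).toReal) := hstep
    _ < ε/2 + ε/2 := add_lt_add hfirst hY
    _ = ε := by ring
end

section
/- Let D ⊆ ℝ³ be a bounded Lebesgue-measurable set of positive measure, ω a unit vector, and 1 ≤ p < ∞, and assume D is p-regular with respect to ω. Then for every γ ∈ (0,1) there exist constants C > 0 and τ₀ > 0 such that for all τ ≥ τ₀, ‖v₀‖_{L¹(D)} / ‖v₀‖_{L²(D)} ≤ C (τ^{−γ/2} + e^{−τ^{1−γ}} τ^{p/2}); in particular the ratio is O(τ^{−γ/2}) as τ → ∞. -/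
open MeasureTheory Filter
open scoped ENNReal NNReal RealInnerProductSpace

lemma exists_phi (ω : EuclideanSpace ℝ (Fin 3)) (hω : ‖ω‖ = 1) :
    ∃ Φ : (EuclideanSpace ℝ (Fin 3)) ≃ᵐ (ℝ × (Fin 2 → ℝ)),
      MeasurePreserving Φ volume volume ∧
      (∀ x, (Φ x).1 = ⟪x, ω⟫) ∧
      (∀ x i, |(Φ x).2 i| ≤ ‖x‖) ∧
      (∀ t : ℝ, LipschitzWith 2 (fun z : Fin 2 → ℝ => Φ.symm (t, z))) := by
  have horth : Orthonormal ℝ (Set.restrict ({0} : Set (Fin 3)) (fun _ => ω)) := by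
    constructor
    · intro i; exact hω
    · intro i j hij
      exfalso
      exact hij (Subtype.ext (by
        have h1 : (i : Fin 3) ∈ ({0} : Set (Fin 3)) := i.2
        have h2 : (j : Fin 3) ∈ ({0} : Set (Fin 3)) := j.2
        simp only [Set.mem_singleton_iff] at h1 h2
        rw [h1, h2]))
  obtain ⟨B, hB⟩ := horth.exists_orthonormalBasis_extension_of_card_eq (by simp)
  have hB0 : B 0 = ω := hB 0 rfl
  set Φ : (EuclideanSpace ℝ (Fin 3)) ≃ᵐ (ℝ × (Fin 2 → ℝ)) :=
    (B.measurableEquiv.trans (MeasurableEquiv.toLp 2 (Fin 3 → ℝ)).symm).trans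
      (MeasurableEquiv.piFinSuccAbove (fun _ : Fin 3 => ℝ) 0) with hΦdef
  refine ⟨Φ, ?_, ?_, ?_, ?_⟩
  · exact (volume_preserving_piFinSuccAbove (fun _ : Fin 3 => ℝ) 0).comp
      ((EuclideanSpace.volume_preserving_symm_measurableEquiv_toLp (Fin 3)).comp
        B.measurePreserving_measurableEquiv)
  · intro x
    have : (Φ x).1 = B.repr x 0 := rfl
    rw [this, B.repr_apply_apply, hB0, real_inner_comm]
  · intro x i
    have h1 : (Φ x).2 i = B.repr x (Fin.succAbove 0 i) := rfl
    rw [h1, ← B.repr.norm_map x]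
    set y := B.repr x
    set j := Fin.succAbove 0 i
    rw [EuclideanSpace.norm_eq, ← Real.sqrt_sq_eq_abs]
    apply Real.sqrt_le_sqrt
    have := Finset.single_le_sum (f := fun k => ‖y k‖ ^ 2)
      (fun k _ => sq_nonneg _) (Finset.mem_univ j)
    simpa [Real.norm_eq_abs, sq_abs] using this
  · intro t
    apply LipschitzWith.of_dist_le_mul
    intro z z'
    have h1 : ∀ w : Fin 2 → ℝ, Φ.symm (t, w) =
        B.repr.symm ((MeasurableEquiv.toLp 2 (Fin 3 → ℝ)).symm.symm (Fin.insertNth 0 t w)) :=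
      fun w => rfl
    rw [h1, h1, B.repr.symm.dist_map]
    rw [EuclideanSpace.dist_eq]
    have h3 : ∀ k : Fin 3, dist ((((MeasurableEquiv.toLp 2 (Fin 3 → ℝ)).symm).symm (Fin.insertNth 0 t z)) k)
        ((((MeasurableEquiv.toLp 2 (Fin 3 → ℝ)).symm).symm (Fin.insertNth 0 t z')) k) ^ 2
        = dist (Fin.insertNth (α := fun _ => ℝ) 0 t z k) (Fin.insertNth (α := fun _ => ℝ) 0 t z' k) ^ 2 := fun k => rfl
    rw [Finset.sum_congr rfl (fun k _ => h3 k)]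
    rw [Fin.sum_univ_succAbove (fun k => dist (Fin.insertNth (α := fun _ => ℝ) 0 t z k) (Fin.insertNth (α := fun _ => ℝ) 0 t z' k) ^ 2) 0]
    simp only [Fin.insertNth_apply_same, Fin.insertNth_apply_succAbove, dist_self]
    have hsum : ∑ j : Fin 2, dist (z j) (z' j) ^ 2 ≤ (2 * dist z z') ^ 2 := by
      have hle : ∀ j : Fin 2, dist (z j) (z' j) ^ 2 ≤ dist z z' ^ 2 := fun j =>
        pow_le_pow_left₀ dist_nonneg (dist_le_pi_dist z z' j) 2
      calc ∑ j : Fin 2, dist (z j) (z' j) ^ 2 ≤ ∑ _j : Fin 2, dist z z' ^ 2 :=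
            Finset.sum_le_sum (fun j _ => hle j)
        _ = 2 * dist z z' ^ 2 := by norm_num [Finset.sum_const]
        _ ≤ (2 * dist z z') ^ 2 := by nlinarith [dist_nonneg (x := z) (y := z'), sq_nonneg (dist z z')]
    have h4 : Real.sqrt ((2 * dist z z') ^ 2) = 2 * dist z z' :=
      Real.sqrt_sq (by positivity)
    have h5 : √(0 ^ 2 + ∑ x : Fin 2, dist (z x) (z' x) ^ 2) ≤ √((2 * dist z z') ^ 2) := by
      apply Real.sqrt_le_sqrt; simpa using hsum
    rw [h4] at h5
    simpa using h5

lemma slice_lintegral_le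
    (D : Set (EuclideanSpace ℝ (Fin 3))) (hD : MeasurableSet D)
    (ω : EuclideanSpace ℝ (Fin 3))
    (Φ : (EuclideanSpace ℝ (Fin 3)) ≃ᵐ (ℝ × (Fin 2 → ℝ)))
    (hmp : MeasurePreserving Φ volume volume)
    (hfst : ∀ x, (Φ x).1 = ⟪x, ω⟫)
    (hlip : ∀ t : ℝ, LipschitzWith 2 (fun z : Fin 2 → ℝ => Φ.symm (t, z)))
    (a b : ℝ) :
    ∫⁻ t in Set.Ioo a b, μH[2] (D ∩ {x | ⟪x, ω⟫ = t}) ≤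
      4 * volume (D ∩ {x | ⟪x, ω⟫ ∈ Set.Ioo a b}) := by
  have hcont : Continuous (fun x : EuclideanSpace ℝ (Fin 3) => ⟪x, ω⟫) :=
    Continuous.inner continuous_id continuous_const
  set A := D ∩ {x | ⟪x, ω⟫ ∈ Set.Ioo a b} with hAdef
  have hAmeas : MeasurableSet A :=
    hD.inter (hcont.measurable measurableSet_Ioo)
  have himg : MeasurableSet (Φ '' A) := Φ.measurableSet_image.2 hAmeas
  have hH2 : (μH[2] : Measure (Fin 2 → ℝ)) = volume := by
    have h := hausdorffMeasure_pi_real (ι := Fin 2)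
    simpa using h
  have key : ∀ t : ℝ, μH[2] (A ∩ {x | ⟪x, ω⟫ = t}) ≤ 4 * volume (Prod.mk t ⁻¹' (Φ '' A)) := by
    intro t
    set st := Prod.mk t ⁻¹' (Φ '' A) with hstdef
    have hst : st = (fun z => Φ.symm (t, z)) ⁻¹' A := by
      ext z
      simp [hstdef, MeasurableEquiv.image_eq_preimage_symm]
    have hset : A ∩ {x | ⟪x, ω⟫ = t} = (fun z : Fin 2 → ℝ => Φ.symm (t, z)) '' st := by
      ext x
      constructor
      · rintro ⟨hxA, hxt⟩
        have hx1 : (t, (Φ x).2) = Φ x := by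
          have : (Φ x).1 = t := by rw [hfst x]; exact hxt
          rw [← this]
        refine ⟨(Φ x).2, ?_, ?_⟩
        · rw [hst]
          show Φ.symm (t, (Φ x).2) ∈ A
          rw [hx1, Φ.symm_apply_apply]; exact hxA
        · show Φ.symm (t, (Φ x).2) = x
          rw [hx1, Φ.symm_apply_apply]
      · rintro ⟨z, hz, rfl⟩
        rw [hst] at hz
        refine ⟨hz, ?_⟩
        show ⟪Φ.symm (t, z), ω⟫ = t
        rw [← hfst (Φ.symm (t, z)), Φ.apply_symm_apply]
    rw [hset]
    have hlipb := (hlip t).hausdorffMeasure_image_le (by norm_num : (0:ℝ) ≤ 2) st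
    refine le_trans hlipb (le_of_eq ?_)
    have h24 : ((2:ℝ≥0) : ℝ≥0∞) ^ (2:ℝ) = 4 := by
      rw [show (2:ℝ) = ((2:ℕ):ℝ) by norm_num, ENNReal.rpow_natCast]
      norm_num
    rw [hH2, h24]
  calc ∫⁻ t in Set.Ioo a b, μH[2] (D ∩ {x | ⟪x, ω⟫ = t})
      = ∫⁻ t in Set.Ioo a b, μH[2] (A ∩ {x | ⟪x, ω⟫ = t}) := by
        apply setLIntegral_congr_fun measurableSet_Ioo
        intro t ht
        dsimp only
        congr 1
        ext x
        simp only [hAdef, Set.mem_inter_iff, Set.mem_setOf_eq]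
        constructor
        · rintro ⟨hxD, hxt⟩; exact ⟨⟨hxD, hxt ▸ ht⟩, hxt⟩
        · rintro ⟨⟨hxD, _⟩, hxt⟩; exact ⟨hxD, hxt⟩
    _ ≤ ∫⁻ t in Set.Ioo a b, 4 * volume (Prod.mk t ⁻¹' (Φ '' A)) := lintegral_mono (fun t => key t)
    _ ≤ ∫⁻ t, 4 * volume (Prod.mk t ⁻¹' (Φ '' A)) := setLIntegral_le_lintegral _ _
    _ = 4 * ∫⁻ t, volume (Prod.mk t ⁻¹' (Φ '' A)) := lintegral_const_mul' 4 _ (by norm_num)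
    _ = 4 * (volume.prod volume) (Φ '' A) := by rw [Measure.prod_apply himg]
    _ = 4 * volume (Φ '' A) := by rw [← Measure.volume_eq_prod]
    _ = 4 * volume A := by
        rw [MeasurableEquiv.image_eq_preimage_symm]
        rw [(hmp.symm Φ).measure_preimage hAmeas.nullMeasurableSet]

lemma slab_volume_le
    (D : Set (EuclideanSpace ℝ (Fin 3))) (hD : MeasurableSet D)
    (ω : EuclideanSpace ℝ (Fin 3))
    (Φ : (EuclideanSpace ℝ (Fin 3)) ≃ᵐ (ℝ × (Fin 2 → ℝ)))
    (hmp : MeasurePreserving Φ volume volume)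
    (hfst : ∀ x, (Φ x).1 = ⟪x, ω⟫)
    (hcoord : ∀ x i, |(Φ x).2 i| ≤ ‖x‖)
    (R c ε : ℝ) (hR : ∀ x ∈ D, ‖x‖ ≤ R) (hc : ∀ x ∈ D, ⟪x, ω⟫ ≤ c) :
    volume (D ∩ {x | c - ε < ⟪x, ω⟫}) ≤
      ENNReal.ofReal ε * (ENNReal.ofReal (2 * R)) ^ 2 := by
  have hcont : Continuous (fun x : EuclideanSpace ℝ (Fin 3) => ⟪x, ω⟫) :=
    Continuous.inner continuous_id continuous_const
  set A := D ∩ {x | c - ε < ⟪x, ω⟫} with hAdef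
  have hAmeas : MeasurableSet A := hD.inter (hcont.measurable measurableSet_Ioi)
  have hvolA : volume A = volume (Φ '' A) := by
    rw [MeasurableEquiv.image_eq_preimage_symm]
    exact ((hmp.symm Φ).measure_preimage hAmeas.nullMeasurableSet).symm
  have hsub : Φ '' A ⊆ Set.Ioc (c - ε) c ×ˢ Set.univ.pi (fun _ : Fin 2 => Set.Icc (-R) R) := by
    rintro y ⟨x, hx, rfl⟩
    rw [Set.mem_prod]
    constructor
    · rw [hfst x]
      exact ⟨hx.2, hc x hx.1⟩
    · intro i _
      have := hcoord x i
      have hRx := hR x hx.1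
      rw [Set.mem_Icc]
      constructor <;> [skip; skip] <;> cases abs_le.1 (le_trans this hRx) with
      | intro h1 h2 => first | exact h1 | exact h2
  calc volume A = volume (Φ '' A) := hvolA
    _ ≤ volume (Set.Ioc (c - ε) c ×ˢ Set.univ.pi (fun _ : Fin 2 => Set.Icc (-R) R)) :=
        measure_mono hsub
    _ = volume (Set.Ioc (c - ε) c) * volume (Set.univ.pi (fun _ : Fin 2 => Set.Icc (-R) R)) := by
        rw [Measure.volume_eq_prod, Measure.prod_prod]
    _ = ENNReal.ofReal ε * (ENNReal.ofReal (2 * R)) ^ 2 := by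
        rw [Real.volume_Ioc, volume_pi_pi]
        congr 1
        · congr 1; ring
        · rw [Real.volume_Icc]; simp only [Finset.prod_const, Finset.card_univ, Fintype.card_fin]
          congr 2
          ring

lemma lower_slab_volume
    (D : Set (EuclideanSpace ℝ (Fin 3))) (hD : MeasurableSet D)
    (ω : EuclideanSpace ℝ (Fin 3))
    (Φ : (EuclideanSpace ℝ (Fin 3)) ≃ᵐ (ℝ × (Fin 2 → ℝ)))
    (hmp : MeasurePreserving Φ volume volume)
    (hfst : ∀ x, (Φ x).1 = ⟪x, ω⟫)
    (hlip : ∀ t : ℝ, LipschitzWith 2 (fun z : Fin 2 → ℝ => Φ.symm (t, z)))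
    (hval C₀ p δ : ℝ) (hC₀ : 0 < C₀) (hp : 1 ≤ p) (hδ : 0 < δ)
    (hae : ∀ᵐ s ∂(volume.restrict (Set.Ioo (0:ℝ) δ)),
      ENNReal.ofReal (C₀ * s ^ (p - 1)) ≤ μH[2] (D ∩ {x | ⟪x, ω⟫ = hval - s}))
    (η : ℝ) (hη0 : 0 < η) (hηδ : η ≤ δ) :
    ENNReal.ofReal (C₀ * η ^ p / p) ≤ 4 * volume (D ∩ {x | hval - η < ⟪x, ω⟫}) := by
  have hp0 : (0:ℝ) < p := lt_of_lt_of_le one_pos hp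
  -- Step 1 : the lintegral of the lower bound
  have hLHS : ∫⁻ s in Set.Ioo (0:ℝ) η, ENNReal.ofReal (C₀ * s ^ (p - 1)) =
      ENNReal.ofReal (C₀ * η ^ p / p) := by
    have hint : IntegrableOn (fun s : ℝ => C₀ * s ^ (p - 1)) (Set.Ioo 0 η) := by
      have hii : IntervalIntegrable (fun s : ℝ => s ^ (p - 1)) volume 0 η :=
        intervalIntegral.intervalIntegrable_rpow' (by linarith)
      have := (intervalIntegrable_iff_integrableOn_Ioc_of_le hη0.le).1 hii
      exact (this.mono_set Set.Ioo_subset_Ioc_self).const_mul C₀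
    rw [← ofReal_integral_eq_lintegral_ofReal hint]
    · congr 1
      rw [MeasureTheory.integral_const_mul]
      have h1 : ∫ s in Set.Ioo (0:ℝ) η, s ^ (p - 1) = ∫ s in (0:ℝ)..η, s ^ (p - 1) := by
        rw [intervalIntegral.integral_of_le hη0.le, integral_Ioc_eq_integral_Ioo]
      rw [h1, integral_rpow (Or.inl (by linarith))]
      rw [sub_add_cancel, Real.zero_rpow (ne_of_gt hp0)]
      ring
    · filter_upwards [ae_restrict_mem measurableSet_Ioo] with s hs
      have : (0:ℝ) ≤ s ^ (p - 1) := Real.rpow_nonneg hs.1.le _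
      positivity
  -- Step 2 : transfer via hae
  have h1 : ∫⁻ s in Set.Ioo (0:ℝ) η, ENNReal.ofReal (C₀ * s ^ (p - 1)) ≤
      ∫⁻ s in Set.Ioo (0:ℝ) η, μH[2] (D ∩ {x | ⟪x, ω⟫ = hval - s}) := by
    apply lintegral_mono_ae
    apply ae_restrict_of_ae_restrict_of_subset (Set.Ioo_subset_Ioo le_rfl hηδ)
    exact hae
  -- Step 3 : change of variables s ↦ hval - s
  have h2 : ∫⁻ s in Set.Ioo (0:ℝ) η, μH[2] (D ∩ {x | ⟪x, ω⟫ = hval - s}) =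
      ∫⁻ t in Set.Ioo (hval - η) hval, μH[2] (D ∩ {x | ⟪x, ω⟫ = t}) := by
    have hmp2 : MeasurePreserving (fun t : ℝ => hval - t) volume volume :=
      Measure.measurePreserving_sub_left volume hval
    have hemb : MeasurableEmbedding (fun t : ℝ => hval - t) :=
      (MeasurableEquiv.subLeft hval).measurableEmbedding
    have hpre : (fun t : ℝ => hval - t) ⁻¹' (Set.Ioo (hval - η) hval) = Set.Ioo 0 η := by
      ext s
      simp only [Set.mem_preimage, Set.mem_Ioo]
      constructor <;> intro h <;> constructor <;> linarith [h.1, h.2]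
    have := hmp2.setLIntegral_comp_preimage_emb hemb
      (fun t => μH[2] (D ∩ {x | ⟪x, ω⟫ = t})) (Set.Ioo (hval - η) hval)
    rw [hpre] at this
    exact this
  -- Step 4 : slicing bound
  have h3 := slice_lintegral_le D hD ω Φ hmp hfst hlip (hval - η) hval
  have h4 : volume (D ∩ {x | ⟪x, ω⟫ ∈ Set.Ioo (hval - η) hval}) ≤
      volume (D ∩ {x | hval - η < ⟪x, ω⟫}) := by
    apply measure_mono
    rintro x ⟨hxD, hx⟩
    exact ⟨hxD, hx.1⟩
  calc ENNReal.ofReal (C₀ * η ^ p / p)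
      = ∫⁻ s in Set.Ioo (0:ℝ) η, ENNReal.ofReal (C₀ * s ^ (p - 1)) := hLHS.symm
    _ ≤ ∫⁻ s in Set.Ioo (0:ℝ) η, μH[2] (D ∩ {x | ⟪x, ω⟫ = hval - s}) := h1
    _ = ∫⁻ t in Set.Ioo (hval - η) hval, μH[2] (D ∩ {x | ⟪x, ω⟫ = t}) := h2
    _ ≤ 4 * volume (D ∩ {x | ⟪x, ω⟫ ∈ Set.Ioo (hval - η) hval}) := h3
    _ ≤ 4 * volume (D ∩ {x | hval - η < ⟪x, ω⟫}) := by
        exact mul_le_mul_right h4 4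


/-- Quantitative version: for every γ ∈ (0,1) there are C > 0 and τ₀ > 0 such that for all
τ ≥ τ₀ the ratio ‖v₀‖_{L¹(D)}/‖v₀‖_{L²(D)} is at most C (τ^{-γ/2} + e^{-τ^{1-γ}} τ^{p/2}). -/
theorem stmt_1
    (D : Set (EuclideanSpace ℝ (Fin 3))) (hDmeas : MeasurableSet D)
    (hDbdd : Bornology.IsBounded D) (hDpos : 0 < volume D)
    (ω : EuclideanSpace ℝ (Fin 3)) (hω : ‖ω‖ = 1)
    (p : ℝ) (hp : 1 ≤ p)
    (hval : ℝ) (hvaldef : hval = sSup ((fun x => ⟪x, ω⟫) '' D))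
    (hreg : ∃ C > (0:ℝ), ∃ δ > (0:ℝ),
      ∀ᵐ s ∂(volume.restrict (Set.Ioo (0:ℝ) δ)),
        ENNReal.ofReal (C * s ^ (p - 1)) ≤
          μH[2] (D ∩ {x | ⟪x, ω⟫ = hval - s})) :
    ∀ γ : ℝ, 0 < γ → γ < 1 →
      ∃ C > (0:ℝ), ∃ τ₀ > (0:ℝ), ∀ τ : ℝ, τ₀ ≤ τ →
        (∫ x in D, Real.exp (τ * ⟪x, ω⟫)) /
            Real.sqrt (∫ x in D, Real.exp (2 * τ * ⟪x, ω⟫)) ≤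
          C * (τ ^ (-(γ / 2)) + Real.exp (-(τ ^ (1 - γ))) * τ ^ (p / 2)) := by
  obtain ⟨C₀, hC₀, δ, hδ, hae⟩ := hreg
  obtain ⟨Φ, hmp, hfst, hcoord, hlip⟩ := exists_phi ω hω
  -- basic setup
  obtain ⟨R', hR'sub⟩ := hDbdd.subset_closedBall 0
  set R : ℝ := max R' 1 with hRdef
  have hR1 : (1:ℝ) ≤ R := le_max_right _ _
  have hR0 : (0:ℝ) < R := lt_of_lt_of_le one_pos hR1
  have hRD : ∀ x ∈ D, ‖x‖ ≤ R := fun x hx =>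
    le_trans (by simpa using hR'sub hx) (le_max_left _ _)
  have hfR : ∀ x ∈ D, |⟪x, ω⟫| ≤ R := by
    intro x hx
    calc |⟪x, ω⟫| ≤ ‖x‖ * ‖ω‖ := abs_real_inner_le_norm x ω
      _ = ‖x‖ := by rw [hω, mul_one]
      _ ≤ R := hRD x hx
  have hbdd : BddAbove ((fun x => ⟪x, ω⟫) '' D) := by
    refine ⟨R, ?_⟩
    rintro y ⟨x, hx, rfl⟩
    exact (abs_le.1 (hfR x hx)).2
  have hfle : ∀ x ∈ D, ⟪x, ω⟫ ≤ hval := fun x hx =>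
    hvaldef ▸ le_csSup hbdd (Set.mem_image_of_mem _ hx)
  have hvolD : volume D < ⊤ := hDbdd.measure_lt_top
  have hvolDr_pos : 0 < (volume D).toReal := ENNReal.toReal_pos hDpos.ne' hvolD.ne
  have hcont : Continuous (fun x : EuclideanSpace ℝ (Fin 3) => ⟪x, ω⟫) :=
    Continuous.inner continuous_id continuous_const
  have hp0 : (0:ℝ) < p := lt_of_lt_of_le one_pos hp
  -- integrability
  have hIntD : ∀ c : ℝ, IntegrableOn (fun x => Real.exp (c * ⟪x, ω⟫)) D := by
    intro c
    refine Integrable.mono' (g := fun _ => Real.exp (|c| * R))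
      (integrableOn_const hvolD.ne)
      ((Real.continuous_exp.comp (continuous_const.mul hcont)).aestronglyMeasurable) ?_
    rw [ae_restrict_iff' hDmeas]
    apply ae_of_all
    intro x hx
    rw [Real.norm_eq_abs, Real.abs_exp, Real.exp_le_exp]
    calc c * ⟪x, ω⟫ ≤ |c * ⟪x, ω⟫| := le_abs_self _
      _ = |c| * |⟪x, ω⟫| := abs_mul _ _
      _ ≤ |c| * R := mul_le_mul_of_nonneg_left (hfR x hx) (abs_nonneg c)
  -- measure bounds in real form
  set K : ℝ := (2*R)^2 with hKdef
  have hK0 : (0:ℝ) < K := by positivity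
  have hfinsub : ∀ S : Set (EuclideanSpace ℝ (Fin 3)), S ⊆ D → volume S ≠ ⊤ :=
    fun S hS => (lt_of_le_of_lt (measure_mono hS) hvolD).ne
  have hB : ∀ ε : ℝ, 0 ≤ ε →
      (volume (D ∩ {x | hval - ε < ⟪x, ω⟫})).toReal ≤ K * ε := by
    intro ε hε
    have h := slab_volume_le D hDmeas ω Φ hmp hfst hcoord R hval ε hRD hfle
    have hfin2 : ENNReal.ofReal ε * ENNReal.ofReal (2 * R) ^ 2 ≠ ⊤ :=
      ENNReal.mul_ne_top ENNReal.ofReal_ne_top (by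
        exact ENNReal.pow_ne_top ENNReal.ofReal_ne_top)
    have h2 := ENNReal.toReal_mono hfin2 h
    rw [ENNReal.toReal_mul, ENNReal.toReal_pow, ENNReal.toReal_ofReal hε,
      ENNReal.toReal_ofReal (by positivity)] at h2
    calc (volume (D ∩ {x | hval - ε < ⟪x, ω⟫})).toReal ≤ ε * (2*R)^2 := h2
      _ = K * ε := by rw [hKdef]; ring
  set C1 : ℝ := C₀ / (4 * p) with hC1def
  have hC1pos : (0:ℝ) < C1 := by positivity
  have hA : ∀ η : ℝ, 0 < η → η ≤ δ →
      C1 * η ^ p ≤ (volume (D ∩ {x | hval - η < ⟪x, ω⟫})).toReal := by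
    intro η hη0 hηδ
    have h := lower_slab_volume D hDmeas ω Φ hmp hfst hlip hval C₀ p δ hC₀ hp hδ hae η hη0 hηδ
    have hfin : (4 : ℝ≥0∞) * volume (D ∩ {x | hval - η < ⟪x, ω⟫}) ≠ ⊤ := by
      apply ENNReal.mul_ne_top (by norm_num)
      exact hfinsub _ Set.inter_subset_left
    rw [ENNReal.ofReal_le_iff_le_toReal hfin, ENNReal.toReal_mul] at h
    have h4 : ((4:ℝ≥0∞)).toReal = 4 := by norm_num
    rw [h4] at h
    have e : C1 * η^p = (C₀ * η^p / p)/4 := by rw [hC1def]; field_simp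
    linarith
  -- main part
  intro γ hγ0 hγ1
  set c1 : ℝ := Real.sqrt (2 * K) with hc1def
  set c2 : ℝ := (volume D).toReal / Real.sqrt C1 with hc2def
  have hc1pos : (0:ℝ) < c1 := Real.sqrt_pos.2 (by positivity)
  have hsC1pos : (0:ℝ) < Real.sqrt C1 := Real.sqrt_pos.2 hC1pos
  have hc2pos : (0:ℝ) < c2 := div_pos hvolDr_pos hsC1pos
  refine ⟨max c1 c2 + 1, by positivity, max 1 (δ⁻¹ ^ γ⁻¹), by positivity, ?_⟩
  intro τ hτ
  have hτ1 : (1:ℝ) ≤ τ := le_trans (le_max_left _ _) hτ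
  have hτ0 : (0:ℝ) < τ := lt_of_lt_of_le one_pos hτ1
  set η : ℝ := τ ^ (-γ) with hηdef
  have hη0 : 0 < η := Real.rpow_pos_of_pos hτ0 _
  have hηδ : η ≤ δ := by
    have h1 : δ⁻¹ ^ γ⁻¹ ≤ τ := le_trans (le_max_right _ _) hτ
    have hδi : (0:ℝ) ≤ δ⁻¹ := by positivity
    have h2 : (δ⁻¹ ^ γ⁻¹) ^ γ ≤ τ ^ γ :=
      Real.rpow_le_rpow (Real.rpow_nonneg hδi _) h1 hγ0.le
    rw [← Real.rpow_mul hδi, inv_mul_cancel₀ (ne_of_gt hγ0), Real.rpow_one] at h2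
    have h3 : (τ ^ γ)⁻¹ ≤ δ⁻¹⁻¹ := inv_anti₀ (by positivity) h2
    rw [inv_inv] at h3
    rw [hηdef, Real.rpow_neg hτ0.le]
    exact h3
  set ε : ℝ := 2 * η with hεdef
  have hε0 : 0 < ε := by positivity
  set Dnear := D ∩ {x | hval - ε < ⟪x, ω⟫} with hDneardef
  set Dfar := D ∩ {x | ⟪x, ω⟫ ≤ hval - ε} with hDfardef
  have hnearmeas : MeasurableSet Dnear :=
    hDmeas.inter (hcont.measurable measurableSet_Ioi)
  have hfarmeas : MeasurableSet Dfar :=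
    hDmeas.inter (hcont.measurable measurableSet_Iic)
  have hnearsub : Dnear ⊆ D := Set.inter_subset_left
  have hfarsub : Dfar ⊆ D := Set.inter_subset_left
  have hunion : D = Dnear ∪ Dfar := by
    ext x
    simp only [hDneardef, hDfardef, Set.mem_union, Set.mem_inter_iff, Set.mem_setOf_eq]
    constructor
    · intro hx
      rcases le_or_gt (⟪x, ω⟫) (hval - ε) with h | h
      · exact Or.inr ⟨hx, h⟩
      · exact Or.inl ⟨hx, h⟩
    · rintro (⟨hx, _⟩ | ⟨hx, _⟩) <;> exact hx
  have hdisj : Disjoint Dnear Dfar := by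
    rw [Set.disjoint_left]
    rintro x ⟨_, h1⟩ ⟨_, h2⟩
    simp only [Set.mem_setOf_eq] at h1 h2
    linarith
  set Q : ℝ := ∫ x in D, Real.exp (2 * τ * ⟪x, ω⟫) with hQdef
  set N : ℝ := ∫ x in D, Real.exp (τ * ⟪x, ω⟫) with hNdef
  -- lower bound for Q
  set mset := D ∩ {x | hval - η < ⟪x, ω⟫} with hmsetdef
  have hmsetmeas : MeasurableSet mset :=
    hDmeas.inter (hcont.measurable measurableSet_Ioi)
  set mη : ℝ := (volume mset).toReal with hmdef
  have hmlow : C1 * η ^ p ≤ mη := hA η hη0 hηδ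
  have hmpos : 0 < mη := lt_of_lt_of_le (by positivity) hmlow
  have hQlow : Real.exp (2*τ*(hval - η)) * mη ≤ Q := by
    have h1 : Real.exp (2*τ*(hval-η)) * mη ≤
        ∫ x in mset, Real.exp (2*τ*⟪x, ω⟫) := by
      apply setIntegral_ge_of_const_le_real hmsetmeas (hfinsub _ Set.inter_subset_left)
      · intro x hx
        rw [Real.exp_le_exp]
        exact mul_le_mul_of_nonneg_left (le_of_lt hx.2) (by positivity)
      · exact (hIntD (2*τ)).mono_set Set.inter_subset_left
    have h2 : ∫ x in mset, Real.exp (2*τ*⟪x, ω⟫) ≤ Q := by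
      apply setIntegral_mono_set (hIntD (2*τ))
      · exact ae_of_all _ fun x => (Real.exp_pos _).le
      · exact HasSubset.Subset.eventuallyLE Set.inter_subset_left
    linarith
  have hQpos : 0 < Q := lt_of_lt_of_le (by positivity) hQlow
  set sq : ℝ := Real.sqrt Q with hsqdef
  have hsqpos : 0 < sq := Real.sqrt_pos.2 hQpos
  -- near bound
  have hnear : ∫ x in Dnear, Real.exp (τ * ⟪x, ω⟫) ≤ Real.sqrt (K * ε) * sq := by
    have hKε : (0:ℝ) < K * ε := by positivity
    have hsKεpos : (0:ℝ) < Real.sqrt (K * ε) := Real.sqrt_pos.2 hKε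
    set lam : ℝ := sq / Real.sqrt (K * ε) with hlamdef
    have hlam0 : 0 < lam := div_pos hsqpos hsKεpos
    have hpt : ∀ x : EuclideanSpace ℝ (Fin 3),
        Real.exp (τ * ⟪x, ω⟫) ≤ (lam + Real.exp (2*τ*⟪x, ω⟫)/lam)/2 := by
      intro x
      have hsqr : Real.exp (τ*⟪x, ω⟫)^2 = Real.exp (2*τ*⟪x, ω⟫) := by
        rw [pow_two, ← Real.exp_add]
        congr 1
        ring
      have heq : (lam + Real.exp (2*τ*⟪x, ω⟫)/lam)/2 - Real.exp (τ*⟪x, ω⟫)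
          = (Real.exp (τ*⟪x, ω⟫) - lam)^2 / (2*lam) := by
        rw [← hsqr]
        field_simp
        ring
      have hnn : (0:ℝ) ≤ (Real.exp (τ*⟪x, ω⟫) - lam)^2 / (2*lam) := by positivity
      rw [← heq] at hnn
      linarith
    have hconstint : IntegrableOn (fun _ : EuclideanSpace ℝ (Fin 3) => lam) Dnear := by
      exact integrableOn_const (lt_of_le_of_lt (measure_mono hnearsub) hvolD).ne
    have h1 : ∫ x in Dnear, Real.exp (τ*⟪x, ω⟫) ≤
        ∫ x in Dnear, (lam + Real.exp (2*τ*⟪x, ω⟫)/lam)/2 := by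
      apply setIntegral_mono ((hIntD τ).mono_set hnearsub) ?_ hpt
      exact (hconstint.add (((hIntD (2*τ)).mono_set hnearsub).div_const lam)).div_const 2
    have h2 : ∫ x in Dnear, (lam + Real.exp (2*τ*⟪x, ω⟫)/lam)/2
        = ((volume Dnear).toReal * lam + (∫ x in Dnear, Real.exp (2*τ*⟪x, ω⟫))/lam)/2 := by
      rw [integral_div, integral_add hconstint
        (((hIntD (2*τ)).mono_set hnearsub).div_const lam),
        integral_div, setIntegral_const, smul_eq_mul]
      rw [mul_div_assoc, ← hlamdef, integral_div]
      rfl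
    have hvnear : (volume Dnear).toReal ≤ K * ε := hB ε hε0.le
    have hQnear : ∫ x in Dnear, Real.exp (2*τ*⟪x, ω⟫) ≤ Q := by
      apply setIntegral_mono_set (hIntD (2*τ))
      · exact ae_of_all _ fun x => (Real.exp_pos _).le
      · exact HasSubset.Subset.eventuallyLE hnearsub
    have hss : Real.sqrt (K*ε) * Real.sqrt (K*ε) = K*ε := Real.mul_self_sqrt hKε.le
    have hQs : sq * sq = Q := Real.mul_self_sqrt hQpos.le
    have e1 : (K*ε) * lam = Real.sqrt (K*ε) * sq := by
      rw [hlamdef, mul_div_assoc', div_eq_iff (ne_of_gt hsKεpos)]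
      linear_combination (-sq) * hss
    have e2 : Q / lam = Real.sqrt (K*ε) * sq := by
      rw [hlamdef, div_div_eq_mul_div, div_eq_iff (ne_of_gt hsqpos)]
      linear_combination (-(Real.sqrt (K*ε))) * hQs
    calc ∫ x in Dnear, Real.exp (τ*⟪x, ω⟫)
        ≤ ((volume Dnear).toReal * lam + (∫ x in Dnear, Real.exp (2*τ*⟪x, ω⟫))/lam)/2 := by
          rw [← h2]; exact h1
      _ ≤ ((K*ε) * lam + Q/lam)/2 := by
          have t1 : (volume Dnear).toReal * lam ≤ (K*ε) * lam :=
            mul_le_mul_of_nonneg_right hvnear hlam0.le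
          have t2 : (∫ x in Dnear, Real.exp (2*τ*⟪x, ω⟫))/lam ≤ Q/lam :=
            by gcongr
          linarith
      _ = Real.sqrt (K*ε) * sq := by rw [e1, e2]; ring
  -- far bound
  have hfar : ∫ x in Dfar, Real.exp (τ*⟪x, ω⟫) ≤ Real.exp (τ*(hval-ε)) * (volume D).toReal := by
    have h1 : ∫ x in Dfar, Real.exp (τ*⟪x, ω⟫) ≤ ∫ x in Dfar, Real.exp (τ*(hval-ε)) := by
      apply setIntegral_mono_on ((hIntD τ).mono_set hfarsub)
        (integrableOn_const (lt_of_le_of_lt (measure_mono hfarsub) hvolD).ne) hfarmeas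
      intro x hx
      rw [Real.exp_le_exp]
      exact mul_le_mul_of_nonneg_left hx.2 hτ0.le
    rw [setIntegral_const, smul_eq_mul] at h1
    calc ∫ x in Dfar, Real.exp (τ*⟪x, ω⟫) ≤ (volume Dfar).toReal * Real.exp (τ*(hval-ε)) := h1
      _ ≤ (volume D).toReal * Real.exp (τ*(hval-ε)) := by
          apply mul_le_mul_of_nonneg_right _ (Real.exp_nonneg _)
          exact ENNReal.toReal_mono hvolD.ne (measure_mono hfarsub)
      _ = Real.exp (τ*(hval-ε)) * (volume D).toReal := by ring
  -- sqrt Q lower bound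
  have hsqlow : Real.exp (τ*(hval-η)) * (Real.sqrt C1 * τ ^ (-(γ*(p/2)))) ≤ sq := by
    have h1 : Real.exp (2*τ*(hval-η)) * (C1 * η^p) ≤ Q := by
      have := mul_le_mul_of_nonneg_left hmlow (Real.exp_nonneg (2*τ*(hval-η)))
      linarith
    have h2 : Real.sqrt (Real.exp (2*τ*(hval-η)) * (C1 * η^p)) ≤ sq := by
      rw [hsqdef]
      exact Real.sqrt_le_sqrt h1
    have e3 : Real.sqrt (Real.exp (2*τ*(hval-η)) * (C1 * η^p))
        = Real.exp (τ*(hval-η)) * (Real.sqrt C1 * τ ^ (-(γ*(p/2)))) := by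
      rw [Real.sqrt_mul (Real.exp_nonneg _), Real.sqrt_mul hC1pos.le]
      congr 1
      · rw [show 2*τ*(hval-η) = τ*(hval-η) + τ*(hval-η) by ring, Real.exp_add,
          Real.sqrt_mul_self (Real.exp_nonneg _)]
      · congr 1
        rw [Real.sqrt_eq_rpow, hηdef, ← Real.rpow_mul hτ0.le, ← Real.rpow_mul hτ0.le]
        congr 1
        ring
    rw [← e3]
    exact h2
  -- exponent algebra
  have hττ : τ ^ ((1:ℝ)-γ) = τ * η := by
    rw [hηdef, show (1:ℝ)-γ = 1 + (-γ) by ring, Real.rpow_add hτ0, Real.rpow_one]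
  have hexpsplit : Real.exp (τ*(hval-ε)) = Real.exp (τ*(hval-η)) * Real.exp (-(τ^((1:ℝ)-γ))) := by
    rw [← Real.exp_add]
    congr 1
    rw [hττ, hεdef]
    ring
  have hpow1 : (1:ℝ) ≤ τ^(p/2) * τ^(-(γ*(p/2))) := by
    rw [← Real.rpow_add hτ0]
    apply Real.one_le_rpow hτ1
    have hq : (0:ℝ) ≤ (p/2) * (1 - γ) :=
      mul_nonneg (by linarith) (by linarith)
    linarith [hq]
  -- term estimates
  have hsqrtKε : Real.sqrt (K * ε) = c1 * τ ^ (-(γ/2)) := by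
    rw [hc1def, hεdef, hηdef]
    rw [show K * (2 * τ^(-γ)) = (2*K) * τ^(-γ) by ring]
    rw [Real.sqrt_mul (by positivity) _]
    congr 1
    rw [Real.sqrt_eq_rpow, ← Real.rpow_mul hτ0.le]
    congr 1
    ring
  have hT1 : (∫ x in Dnear, Real.exp (τ*⟪x, ω⟫)) / sq ≤ c1 * τ ^ (-(γ/2)) := by
    rw [div_le_iff₀ hsqpos, ← hsqrtKε]
    exact hnear
  have hT2 : (∫ x in Dfar, Real.exp (τ*⟪x, ω⟫)) / sq
      ≤ c2 * (Real.exp (-(τ^((1:ℝ)-γ))) * τ^(p/2)) := by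
    rw [div_le_iff₀ hsqpos]
    have hEpos : (0:ℝ) < Real.exp (-(τ^((1:ℝ)-γ))) := Real.exp_pos _
    have hrp : (0:ℝ) < τ^(p/2) := Real.rpow_pos_of_pos hτ0 _
    have hrp2 : (0:ℝ) < τ^(-(γ*(p/2))) := Real.rpow_pos_of_pos hτ0 _
    calc (∫ x in Dfar, Real.exp (τ*⟪x, ω⟫))
        ≤ Real.exp (τ*(hval-ε)) * (volume D).toReal := hfar
      _ = (volume D).toReal * Real.exp (τ*(hval-η)) * Real.exp (-(τ^((1:ℝ)-γ))) := by
          rw [hexpsplit]; ring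
      _ ≤ (volume D).toReal * Real.exp (τ*(hval-η)) * Real.exp (-(τ^((1:ℝ)-γ)))
            * (τ^(p/2) * τ^(-(γ*(p/2)))) := by
          apply le_mul_of_one_le_right _ hpow1
          positivity
      _ = c2 * (Real.exp (-(τ^((1:ℝ)-γ))) * τ^(p/2)) *
            (Real.exp (τ*(hval-η)) * (Real.sqrt C1 * τ^(-(γ*(p/2))))) := by
          rw [hc2def]
          field_simp
      _ ≤ c2 * (Real.exp (-(τ^((1:ℝ)-γ))) * τ^(p/2)) * sq := by
          apply mul_le_mul_of_nonneg_left hsqlow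
          have : (0:ℝ) ≤ c2 := hc2pos.le
          positivity
  -- combine
  have hsplit : N = (∫ x in Dnear, Real.exp (τ*⟪x, ω⟫)) + (∫ x in Dfar, Real.exp (τ*⟪x, ω⟫)) := by
    rw [hNdef]
    conv_lhs => rw [hunion]
    exact setIntegral_union hdisj hfarmeas ((hIntD τ).mono_set hnearsub)
      ((hIntD τ).mono_set hfarsub)
  have hTa : (0:ℝ) ≤ τ^(-(γ/2)) := (Real.rpow_pos_of_pos hτ0 _).le
  have hTb : (0:ℝ) ≤ Real.exp (-(τ^((1:ℝ)-γ))) * τ^(p/2) := by positivity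
  have hm1 : c1 ≤ max c1 c2 + 1 := by have := le_max_left c1 c2; linarith
  have hm2 : c2 ≤ max c1 c2 + 1 := by have := le_max_right c1 c2; linarith
  calc N / sq = (∫ x in Dnear, Real.exp (τ*⟪x, ω⟫)) / sq
        + (∫ x in Dfar, Real.exp (τ*⟪x, ω⟫)) / sq := by rw [hsplit, add_div]
    _ ≤ c1 * τ^(-(γ/2)) + c2 * (Real.exp (-(τ^((1:ℝ)-γ))) * τ^(p/2)) := add_le_add hT1 hT2
    _ ≤ (max c1 c2 + 1) * (τ^(-(γ/2)) + Real.exp (-(τ^((1:ℝ)-γ))) * τ^(p/2)) := by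
        have u1 : c1 * τ^(-(γ/2)) ≤ (max c1 c2 + 1) * τ^(-(γ/2)) :=
          mul_le_mul_of_nonneg_right hm1 hTa
        have u2 : c2 * (Real.exp (-(τ^((1:ℝ)-γ))) * τ^(p/2))
            ≤ (max c1 c2 + 1) * (Real.exp (-(τ^((1:ℝ)-γ))) * τ^(p/2)) :=
          mul_le_mul_of_nonneg_right hm2 hTb
        linarith [u1, u2]
end

section
/- Let D ⊆ ℝ³ be a bounded Lebesgue-measurable set of positive measure, ω a unit vector, and 1 ≤ p < ∞, and assume D is p-regular with respect to ω. Then there exist constants C > 0 and τ₀ > 0 such that for all τ ≥ τ₀, e^{−τ h_D(ω)} ‖v₀‖_{L²(D)} ≥ C τ^{−p/2}, where v₀(x) = e^{τ x·ω}. -/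
open MeasureTheory Filter
open scoped ENNReal NNReal RealInnerProductSpace

noncomputable section Stmt4Aux

private abbrev stmtE3 := EuclideanSpace ℝ (Fin 3)

private def stmtPhi (b : OrthonormalBasis (Fin 3) ℝ stmtE3) :
    stmtE3 ≃ᵐ (ℝ × (Fin 2 → ℝ)) :=
  (b.repr.toHomeomorph.toMeasurableEquiv).trans
    ((MeasurableEquiv.toLp 2 (Fin 3 → ℝ)).symm.trans
      (MeasurableEquiv.piFinSuccAbove (fun _ => ℝ) 0))

private lemma stmtPhi_mp (b : OrthonormalBasis (Fin 3) ℝ stmtE3) :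
    MeasurePreserving (stmtPhi b) volume volume :=
  ((volume_preserving_piFinSuccAbove (fun _ : Fin 3 => ℝ) 0).comp
      (EuclideanSpace.volume_preserving_symm_measurableEquiv_toLp (Fin 3))).comp
    b.measurePreserving_repr

private lemma stmtPhi_lip (b : OrthonormalBasis (Fin 3) ℝ stmtE3) (c : ℝ) :
    LipschitzWith 2 (fun y : Fin 2 → ℝ => (stmtPhi b).symm (c, y)) := by
  apply LipschitzWith.of_dist_le_mul
  intro y y'
  have hd : (0:ℝ) ≤ dist y y' := dist_nonneg
  have key : dist ((stmtPhi b).symm (c, y)) ((stmtPhi b).symm (c, y')) =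
      Real.sqrt (∑ i : Fin 3, dist (Fin.insertNth (α := fun _ : Fin 3 => ℝ) 0 c y i)
        (Fin.insertNth (α := fun _ : Fin 3 => ℝ) 0 c y' i) ^ 2) := by
    show dist (b.repr.symm _) (b.repr.symm _) = _
    rw [b.repr.symm.dist_map]
    exact EuclideanSpace.dist_eq (𝕜 := ℝ) (n := Fin 3) _ _
  rw [key]
  have hsum : ∑ i : Fin 3, dist (Fin.insertNth (α := fun _ : Fin 3 => ℝ) 0 c y i)
      (Fin.insertNth (α := fun _ : Fin 3 => ℝ) 0 c y' i) ^ 2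
      ≤ (2 * dist y y') ^ 2 := by
    rw [Fin.sum_univ_succ]
    simp only [Fin.insertNth_apply_same]
    have h0 : dist c c = 0 := dist_self c
    rw [h0]
    have hterm : ∀ j : Fin 2, dist (Fin.insertNth (α := fun _ : Fin 3 => ℝ) 0 c y j.succ)
        (Fin.insertNth (α := fun _ : Fin 3 => ℝ) 0 c y' j.succ) ^ 2
        ≤ dist y y' ^ 2 := by
      intro j
      have hy : Fin.insertNth (α := fun _ : Fin 3 => ℝ) (0 : Fin 3) c y j.succ = y j := by
        have := Fin.insertNth_apply_succAbove (α := fun _ : Fin 3 => ℝ) (i := (0:Fin 3))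
          (j := j) (x := c) (p := y)
        simpa [Fin.succAbove_zero] using this
      have hy' : Fin.insertNth (α := fun _ : Fin 3 => ℝ) (0 : Fin 3) c y' j.succ = y' j := by
        have := Fin.insertNth_apply_succAbove (α := fun _ : Fin 3 => ℝ) (i := (0:Fin 3))
          (j := j) (x := c) (p := y')
        simpa [Fin.succAbove_zero] using this
      rw [hy, hy']
      exact pow_le_pow_left₀ dist_nonneg (dist_le_pi_dist y y' j) 2
    calc (0:ℝ)^2 + ∑ j : Fin 2, dist (Fin.insertNth (α := fun _ : Fin 3 => ℝ) 0 c y j.succ)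
          (Fin.insertNth (α := fun _ : Fin 3 => ℝ) 0 c y' j.succ) ^ 2
        ≤ 0 + ∑ j : Fin 2, dist y y' ^ 2 := by
          have h00 : (0:ℝ)^2 = 0 := by norm_num
          rw [h00]
          exact add_le_add le_rfl (Finset.sum_le_sum fun j _ => hterm j)
      _ = 2 * dist y y' ^ 2 := by rw [Fin.sum_univ_two]; ring
      _ ≤ (2 * dist y y') ^ 2 := by nlinarith
  calc Real.sqrt _ ≤ Real.sqrt ((2 * dist y y')^2) := Real.sqrt_le_sqrt hsum
    _ = 2 * dist y y' := Real.sqrt_sq (by positivity)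

private lemma stmtPhi_fst (b : OrthonormalBasis (Fin 3) ℝ stmtE3) {ω : stmtE3}
    (hb0 : b 0 = ω) (x : stmtE3) :
    (stmtPhi b x).1 = ⟪x, ω⟫ := by
  show b.repr x 0 = ⟪x, ω⟫
  rw [b.repr_apply_apply, hb0, real_inner_comm]

private lemma stmt_planeVolume : (μH[2] : Measure (Fin 2 → ℝ)) = volume := by
  have := MeasureTheory.hausdorffMeasure_pi_real (ι := Fin 2)
  simpa using this

private lemma stmt_slice_le (b : OrthonormalBasis (Fin 3) ℝ stmtE3) {ω : stmtE3}
    (hb0 : b 0 = ω) (D : Set stmtE3) (c : ℝ) :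
    μH[2] (D ∩ {x | ⟪x, ω⟫ = c}) ≤ 4 * volume (Prod.mk c ⁻¹' (stmtPhi b '' D)) := by
  set T : Set (Fin 2 → ℝ) := Prod.mk c ⁻¹' (stmtPhi b '' D) with hT
  have him : D ∩ {x | ⟪x, ω⟫ = c} = (fun y => (stmtPhi b).symm (c, y)) '' T := by
    ext x
    simp only [Set.mem_inter_iff, Set.mem_setOf_eq, Set.mem_image, Set.mem_preimage, hT]
    constructor
    · rintro ⟨hxD, hxc⟩
      have hx : stmtPhi b x = (c, (stmtPhi b x).2) := by
        have h1 := stmtPhi_fst b hb0 x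
        apply Prod.ext <;> simp [h1, hxc]
      exact ⟨(stmtPhi b x).2, ⟨x, hxD, hx⟩, by rw [← hx]; exact (stmtPhi b).symm_apply_apply x⟩
    · rintro ⟨y, ⟨x', hx'D, hx'⟩, rfl⟩
      have hx : (stmtPhi b).symm (c, y) = x' := by
        rw [← hx']; exact (stmtPhi b).symm_apply_apply x'
      rw [hx]
      exact ⟨hx'D, by rw [← stmtPhi_fst b hb0 x', hx']⟩
  rw [him]
  calc μH[2] ((fun y => (stmtPhi b).symm (c, y)) '' T)
      ≤ ((2:ℝ≥0):ℝ≥0∞) ^ (2:ℝ) * μH[2] T :=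
        (stmtPhi_lip b c).hausdorffMeasure_image_le (by norm_num) T
    _ = 4 * volume T := by
        rw [stmt_planeVolume]
        congr 1
        rw [show ((2:ℝ≥0):ℝ≥0∞) = (2:ℝ≥0∞) by norm_num,
          show (2:ℝ) = ((2:ℕ):ℝ) by norm_num, ENNReal.rpow_natCast]
        norm_num

private lemma stmt_fubini (b : OrthonormalBasis (Fin 3) ℝ stmtE3) {D : Set stmtE3}
    (hD : MeasurableSet D) (w : ℝ → ℝ≥0∞) (hw : Measurable w) :
    ∫⁻ x in D, w ((stmtPhi b x).1) =
      ∫⁻ c, w c * volume (Prod.mk c ⁻¹' (stmtPhi b '' D)) := by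
  set S : Set (ℝ × (Fin 2 → ℝ)) := stmtPhi b '' D with hS
  have hSm : MeasurableSet S := (stmtPhi b).measurableEmbedding.measurableSet_image.2 hD
  have h1 : ∫⁻ x in D, w ((stmtPhi b x).1) =
      ∫⁻ x, S.indicator (fun z => w z.1) (stmtPhi b x) := by
    rw [← lintegral_indicator hD]
    congr 1
    funext x
    by_cases hx : x ∈ D
    · rw [Set.indicator_of_mem hx, Set.indicator_of_mem (Set.mem_image_of_mem _ hx)]
    · rw [Set.indicator_of_notMem hx, Set.indicator_of_notMem
        (fun h => hx (((stmtPhi b).injective.mem_set_image).1 h))]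
  have hmeas : Measurable (S.indicator (fun z : ℝ × (Fin 2 → ℝ) => w z.1)) :=
    (hw.comp measurable_fst).indicator hSm
  have h2 : ∫⁻ x, S.indicator (fun z => w z.1) (stmtPhi b x) =
      ∫⁻ z, S.indicator (fun z => w z.1) z := (stmtPhi_mp b).lintegral_comp hmeas
  have h3 : ∫⁻ z, S.indicator (fun z : ℝ × (Fin 2 → ℝ) => w z.1) z =
      ∫⁻ c, ∫⁻ y, S.indicator (fun z => w z.1) (c, y) := by
    rw [Measure.volume_eq_prod, lintegral_prod _ hmeas.aemeasurable]
  rw [h1, h2, h3]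
  congr 1
  funext c
  have hy : ∀ y, S.indicator (fun z : ℝ × (Fin 2 → ℝ) => w z.1) (c, y) =
      (Prod.mk c ⁻¹' S).indicator (fun _ => w c) y := by
    intro y
    by_cases hy : (c, y) ∈ S <;>
      simp [Set.indicator_apply, Set.mem_preimage, hy]
  simp only [hy]
  rw [lintegral_indicator (measurable_prodMk_left hSm)]
  simp [Measure.restrict_apply]

end Stmt4Aux

/-- If D is p-regular with respect to ω then there are C > 0 and τ₀ > 0 such that for all
τ ≥ τ₀, e^{-τ h_D(ω)} ‖v₀‖_{L²(D)} ≥ C τ^{-p/2}. -/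
theorem stmt_4
    (D : Set (EuclideanSpace ℝ (Fin 3))) (hDmeas : MeasurableSet D)
    (hDbdd : Bornology.IsBounded D) (hDpos : 0 < volume D)
    (ω : EuclideanSpace ℝ (Fin 3)) (hω : ‖ω‖ = 1)
    (p : ℝ) (hp : 1 ≤ p)
    (hval : ℝ) (hvaldef : hval = sSup ((fun x => ⟪x, ω⟫) '' D))
    (hreg : ∃ C > (0:ℝ), ∃ δ > (0:ℝ),
      ∀ᵐ s ∂(volume.restrict (Set.Ioo (0:ℝ) δ)),
        ENNReal.ofReal (C * s ^ (p - 1)) ≤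
          μH[2] (D ∩ {x | ⟪x, ω⟫ = hval - s})) :
    ∃ C > (0:ℝ), ∃ τ₀ > (0:ℝ), ∀ τ : ℝ, τ₀ ≤ τ →
      C * τ ^ (-(p / 2)) ≤
        Real.exp (-(τ * hval)) * Real.sqrt (∫ x in D, Real.exp (2 * τ * ⟪x, ω⟫)) := by
  obtain ⟨C, hC, δ, hδ, hae⟩ := hreg
  -- an orthonormal basis whose first vector is ω
  obtain ⟨b, hb⟩ : ∃ b : OrthonormalBasis (Fin 3) ℝ (EuclideanSpace ℝ (Fin 3)),
      ∀ i ∈ ({0} : Set (Fin 3)), b i = (fun _ : Fin 3 => ω) i := by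
    apply Orthonormal.exists_orthonormalBasis_extension_of_card_eq
    · simp
    · constructor
      · intro i; simpa using hω
      · intro i j hij
        exact absurd (Subtype.ext (i.2.trans j.2.symm)) hij
  have hb0 : b 0 = ω := hb 0 rfl
  set S : Set (ℝ × (Fin 2 → ℝ)) := stmtPhi b '' D with hSdef
  have hSm : MeasurableSet S := (stmtPhi b).measurableEmbedding.measurableSet_image.2 hDmeas
  set ν : ℝ → ℝ≥0∞ := fun c => volume (Prod.mk c ⁻¹' S) with hνdef
  have hνmeas : Measurable ν := measurable_measure_prodMk_left hSm
  -- bound for D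
  obtain ⟨R, hR⟩ := hDbdd.subset_closedBall 0
  -- the constants
  set M : ℝ := Real.exp (-2) * (C/4) * (2:ℝ) ^ (-p) with hMdef
  have hM : 0 < M := by
    apply mul_pos (mul_pos (Real.exp_pos _) (by linarith))
    exact Real.rpow_pos_of_pos (by norm_num) _
  refine ⟨Real.sqrt M, Real.sqrt_pos.2 hM, max 1 δ⁻¹, lt_of_lt_of_le one_pos (le_max_left _ _),
    fun τ hτ => ?_⟩
  have hτ1 : (1:ℝ) ≤ τ := le_trans (le_max_left _ _) hτ
  have hτpos : (0:ℝ) < τ := lt_of_lt_of_le one_pos hτ1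
  have hτδ : τ⁻¹ ≤ δ := by
    have h1 : δ⁻¹ ≤ τ := le_trans (le_max_right _ _) hτ
    calc τ⁻¹ ≤ (δ⁻¹)⁻¹ := by
          apply inv_anti₀ (by positivity) h1
      _ = δ := inv_inv δ
  set w : ℝ → ℝ≥0∞ := fun c => ENNReal.ofReal (Real.exp (2 * τ * c)) with hwdef
  have hw : Measurable w :=
    ENNReal.measurable_ofReal.comp
      (Real.continuous_exp.comp (continuous_const.mul continuous_id)).measurable
  set L : ℝ≥0∞ := ∫⁻ x in D, ENNReal.ofReal (Real.exp (2 * τ * ⟪x, ω⟫)) with hLdef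
  -- Fubini
  have hL1 : L = ∫⁻ c, w c * ν c := by
    rw [hLdef, ← stmt_fubini b hDmeas w hw]
    apply lintegral_congr
    intro x
    rw [stmtPhi_fst b hb0]
  -- change of variables c = hval - s
  have hFmeas : Measurable (fun c => w c * ν c) := hw.mul hνmeas
  have hL2 : ∫⁻ c, w c * ν c = ∫⁻ s, w (hval - s) * ν (hval - s) :=
    ((Measure.measurePreserving_sub_left volume hval).lintegral_comp hFmeas).symm
  -- the interval
  set I : Set ℝ := Set.Ioo (τ⁻¹/2) τ⁻¹ with hIdef
  have hIsub : I ⊆ Set.Ioo 0 δ := by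
    rintro s ⟨h1, h2⟩
    exact ⟨lt_trans (by positivity) h1, lt_of_lt_of_le h2 hτδ⟩
  -- the pointwise constant lower bound on I
  set K : ℝ≥0∞ := ENNReal.ofReal (Real.exp (2*τ*hval - 2)) *
    (ENNReal.ofReal (C * (τ⁻¹/2) ^ (p-1)) / 4) with hKdef
  have haeI : ∀ᵐ s ∂(volume.restrict I), K ≤ w (hval - s) * ν (hval - s) := by
    filter_upwards [ae_restrict_of_ae_restrict_of_subset hIsub hae,
      ae_restrict_mem measurableSet_Ioo] with s hs1 hs2
    have hνge : ENNReal.ofReal (C * s ^ (p-1)) / 4 ≤ ν (hval - s) := by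
      refine (ENNReal.div_le_iff_le_mul (Or.inl (by norm_num)) (Or.inl (by norm_num))).2 ?_
      have h4 : ENNReal.ofReal (C * s ^ (p-1)) ≤ 4 * ν (hval - s) :=
        le_trans hs1 (stmt_slice_le b hb0 D (hval - s))
      exact h4.trans_eq (mul_comm _ _)
    have hwge : ENNReal.ofReal (Real.exp (2*τ*hval - 2)) ≤ w (hval - s) := by
      apply ENNReal.ofReal_le_ofReal
      apply Real.exp_le_exp.2
      have hsτ : τ * s ≤ 1 := by
        calc τ * s ≤ τ * τ⁻¹ := by
              apply mul_le_mul_of_nonneg_left hs2.2.le hτpos.le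
          _ = 1 := mul_inv_cancel₀ hτpos.ne'
      nlinarith
    have hspow : (τ⁻¹/2) ^ (p-1) ≤ s ^ (p-1) :=
      Real.rpow_le_rpow (by positivity) hs2.1.le (by linarith)
    have hK2 : ENNReal.ofReal (C * (τ⁻¹/2) ^ (p-1)) / 4 ≤ ν (hval - s) := by
      refine le_trans ?_ hνge
      apply ENNReal.div_le_div_right
      apply ENNReal.ofReal_le_ofReal
      exact mul_le_mul_of_nonneg_left hspow hC.le
    exact mul_le_mul' hwge hK2
  -- putting the integral bounds together
  have hIvol : volume I = ENNReal.ofReal (τ⁻¹/2) := by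
    rw [hIdef, Real.volume_Ioo]
    congr 1
    ring
  have hmain : K * ENNReal.ofReal (τ⁻¹/2) ≤ L := by
    calc K * ENNReal.ofReal (τ⁻¹/2) = K * volume I := by rw [hIvol]
      _ = ∫⁻ _ in I, K := (setLIntegral_const I K).symm
      _ ≤ ∫⁻ s in I, w (hval - s) * ν (hval - s) := lintegral_mono_ae haeI
      _ ≤ ∫⁻ s, w (hval - s) * ν (hval - s) := setLIntegral_le_lintegral _ _
      _ = L := by rw [hL1, hL2]
  -- the real-valued lower bound
  set B : ℝ := Real.exp (2*τ*hval - 2) * (C * (τ⁻¹/2) ^ (p-1) / 4 * (τ⁻¹/2)) with hBdef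
  have hBle : ENNReal.ofReal B ≤ L := by
    refine le_trans (le_of_eq ?_) hmain
    rw [hBdef, hKdef, ENNReal.ofReal_mul (Real.exp_nonneg _),
      ENNReal.ofReal_mul (show (0:ℝ) ≤ C * (τ⁻¹/2) ^ (p-1)/4 by positivity),
      ENNReal.ofReal_div_of_pos (show (0:ℝ) < 4 by norm_num), ENNReal.ofReal_ofNat]
    ring
  -- finiteness of L
  have hLfin : L ≠ ⊤ := by
    have hbound : L ≤ ENNReal.ofReal (Real.exp (2*τ*R)) * volume D := by
      rw [hLdef, ← setLIntegral_const D (ENNReal.ofReal (Real.exp (2*τ*R)))]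
      apply setLIntegral_mono' hDmeas
      intro x hx
      apply ENNReal.ofReal_le_ofReal
      apply Real.exp_le_exp.2
      have h1 : ⟪x, ω⟫ ≤ R := by
        calc ⟪x, ω⟫ ≤ ‖x‖ * ‖ω‖ := real_inner_le_norm x ω
          _ = ‖x‖ := by rw [hω, mul_one]
          _ ≤ R := by simpa using hR hx
      nlinarith
    exact ne_top_of_le_ne_top
      (ENNReal.mul_ne_top ENNReal.ofReal_ne_top hDbdd.measure_lt_top.ne) hbound
  -- relating to the Bochner integral
  have hInt : ∫ x in D, Real.exp (2 * τ * ⟪x, ω⟫) = L.toReal := by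
    rw [hLdef]
    apply integral_eq_lintegral_of_nonneg_ae
    · exact Filter.Eventually.of_forall fun x => (Real.exp_pos _).le
    · apply Continuous.aestronglyMeasurable
      exact Real.continuous_exp.comp (continuous_const.mul (continuous_id.inner continuous_const))
  have hBint : B ≤ ∫ x in D, Real.exp (2 * τ * ⟪x, ω⟫) := by
    rw [hInt]
    exact (ENNReal.ofReal_le_iff_le_toReal hLfin).1 hBle
  -- final algebra
  have hrpow : (τ⁻¹/2) ^ (p-1) * (τ⁻¹/2) = (2:ℝ)^(-p) * τ^(-p) := by
    have ha : (0:ℝ) < τ⁻¹/2 := by positivity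
    calc (τ⁻¹/2) ^ (p-1) * (τ⁻¹/2) = (τ⁻¹/2) ^ (p-1) * (τ⁻¹/2) ^ (1:ℝ) := by
          rw [Real.rpow_one]
      _ = (τ⁻¹/2) ^ (p-1+1) := (Real.rpow_add ha _ _).symm
      _ = (τ⁻¹/2) ^ p := by norm_num
      _ = (2⁻¹:ℝ)^p * (τ⁻¹)^p := by
          rw [show τ⁻¹/2 = 2⁻¹ * τ⁻¹ by ring,
            Real.mul_rpow (by norm_num) (by positivity)]
      _ = (2:ℝ)^(-p) * τ^(-p) := by
          rw [Real.inv_rpow (by norm_num : (0:ℝ) ≤ 2), Real.inv_rpow hτpos.le,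
            ← Real.rpow_neg (by norm_num : (0:ℝ) ≤ 2), ← Real.rpow_neg hτpos.le]
  have hexp : Real.exp (2*τ*hval - 2) = Real.exp (τ*hval)^2 * Real.exp (-2) := by
    rw [show 2*τ*hval - 2 = τ*hval + (τ*hval + (-2)) by ring, Real.exp_add, Real.exp_add]
    ring
  have hBeq : B = Real.exp (τ*hval)^2 * (M * τ^(-p)) := by
    rw [hBdef, hexp, hMdef,
      show C * (τ⁻¹/2) ^ (p-1) / 4 * (τ⁻¹/2) = (C/4) * ((τ⁻¹/2) ^ (p-1) * (τ⁻¹/2)) by ring,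
      hrpow]
    ring
  have hsqrtτ : Real.sqrt (τ^(-p)) = τ ^ (-(p/2)) := by
    rw [Real.sqrt_eq_rpow, ← Real.rpow_mul hτpos.le]
    congr 1
    ring
  have hsqrtB : Real.sqrt B = Real.exp (τ*hval) * (Real.sqrt M * τ ^ (-(p/2))) := by
    rw [hBeq, Real.sqrt_mul (sq_nonneg _), Real.sqrt_sq (Real.exp_nonneg _),
      Real.sqrt_mul hM.le, hsqrtτ]
  calc Real.sqrt M * τ ^ (-(p/2))
      = Real.exp (-(τ*hval)) * Real.sqrt B := by
        rw [hsqrtB, Real.exp_neg, ← mul_assoc, inv_mul_cancel₀ (Real.exp_pos _).ne', one_mul]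
    _ ≤ Real.exp (-(τ*hval)) * Real.sqrt (∫ x in D, Real.exp (2 * τ * ⟪x, ω⟫)) := by
        apply mul_le_mul_of_nonneg_left (Real.sqrt_le_sqrt hBint) (Real.exp_nonneg _)
end

section
/- Let D = { x ∈ ℝ² : x₁ < x₂ < 2x₁ and 0 < x₁ } ∩ B, where B is the open unit disk centered at the origin, and let ω = −e₂ = (0,−1). Then: (i) h_D(ω) = sup_{x∈D} x·ω = 0 and the closure of D meets the line {x : x·ω = 0} only at the origin; and (ii) for every δ ∈ (0, 1/√2), every C ≥ 0, and every function l : ℝ → ℝ with 0 ≤ l(t) ≤ C|t| for all t, the set D does not equal { y ∈ ℝ² : |y₁| < δ and l(y₁) < y₂ < δ }. -/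
open MeasureTheory Filter
open scoped ENNReal RealInnerProductSpace

private noncomputable def pt15 (t : ℝ) : EuclideanSpace ℝ (Fin 2) :=
  (WithLp.equiv 2 (Fin 2 → ℝ)).symm ![t, 3/2 * t]

private lemma pt15_apply0 (t : ℝ) : pt15 t 0 = t := rfl
private lemma pt15_apply1 (t : ℝ) : pt15 t 1 = 3/2 * t := rfl

private lemma pt15_norm_le (t : ℝ) (ht : 0 ≤ t) : ‖pt15 t‖ ≤ 2 * t := by
  have h : ‖pt15 t‖ = Real.sqrt (‖t‖ ^ 2 + ‖3/2 * t‖ ^ 2) := by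
    rw [EuclideanSpace.norm_eq, Fin.sum_univ_two, pt15_apply0, pt15_apply1]
  rw [h]
  have h2 : ‖t‖ ^ 2 + ‖3/2 * t‖ ^ 2 ≤ (2 * t) ^ 2 := by
    simp only [norm_mul, Real.norm_eq_abs, abs_of_nonneg ht]
    rw [abs_of_nonneg (by norm_num : (0:ℝ) ≤ 3/2)]
    nlinarith
  calc Real.sqrt (‖t‖ ^ 2 + ‖3/2 * t‖ ^ 2) ≤ Real.sqrt ((2 * t) ^ 2) :=
        Real.sqrt_le_sqrt h2
    _ = 2 * t := by rw [Real.sqrt_sq (by linarith)]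

/-- The planar sector counterexample of Section 4: for
D = {x : x₁ < x₂ < 2x₁, 0 < x₁} ∩ B(0,1) and ω = -e₂ = (0,-1),
(i) h_D(ω) = 0 and the closure of D meets the line {x·ω = 0} only at the origin, and
(ii) for every δ ∈ (0, 1/√2), every C ≥ 0 and every l : ℝ → ℝ with 0 ≤ l(t) ≤ C|t|,
D is not the Lipschitz subgraph region {y : |y₁| < δ, l(y₁) < y₂ < δ}. -/
theorem stmt_15
    (D : Set (EuclideanSpace ℝ (Fin 2)))
    (hD : D = {x : EuclideanSpace ℝ (Fin 2) | x 0 < x 1 ∧ x 1 < 2 * x 0 ∧ 0 < x 0} ∩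
      Metric.ball 0 1)
    (ω : EuclideanSpace ℝ (Fin 2)) (hω : ω 0 = 0 ∧ ω 1 = -1) :
    sSup ((fun x => ⟪x, ω⟫) '' D) = 0 ∧
    closure D ∩ {x | ⟪x, ω⟫ = 0} = {(0 : EuclideanSpace ℝ (Fin 2))} ∧
    (∀ δ : ℝ, 0 < δ → δ < 1 / Real.sqrt 2 →
      ∀ C : ℝ, 0 ≤ C → ∀ l : ℝ → ℝ, (∀ t, 0 ≤ l t ∧ l t ≤ C * |t|) →
        D ≠ {y : EuclideanSpace ℝ (Fin 2) | |y 0| < δ ∧ l (y 0) < y 1 ∧ y 1 < δ}) := by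
  obtain ⟨hω0, hω1⟩ := hω
  have hinner : ∀ x : EuclideanSpace ℝ (Fin 2), ⟪x, ω⟫ = -(x 1) := by
    intro x
    simp [PiLp.inner_apply, Fin.sum_univ_two, hω0, hω1]
  -- membership of the sample points
  have hmem : ∀ t : ℝ, 0 < t → t < 1/2 → pt15 t ∈ D := by
    intro t ht ht2
    rw [hD]
    constructor
    · refine ⟨?_, ?_, ?_⟩ <;> simp only [pt15_apply0, pt15_apply1] <;> linarith
    · rw [Metric.mem_ball, dist_zero_right]
      have := pt15_norm_le t ht.le
      linarith
  refine ⟨?_, ?_, ?_⟩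
  · -- sSup = 0
    apply le_antisymm
    · apply Real.sSup_le
      · rintro y ⟨x, hx, rfl⟩
        rw [hD] at hx
        simp only [hinner]
        linarith [hx.1.1, hx.1.2.2]
      · exact le_refl 0
    · by_contra h
      push_neg at h
      set b := sSup ((fun x => ⟪x, ω⟫) '' D) with hb
      have hbneg : b < 0 := h
      set t : ℝ := min (1/4) (-b/3) with htdef
      have ht0 : 0 < t := lt_min (by norm_num) (by linarith)
      have ht2 : t < 1/2 := lt_of_le_of_lt (min_le_left _ _) (by norm_num)
      have hmemE : ⟪pt15 t, ω⟫ ∈ (fun x => ⟪x, ω⟫) '' D :=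
        ⟨pt15 t, hmem t ht0 ht2, rfl⟩
      have hle : ⟪pt15 t, ω⟫ ≤ b := by
        apply le_csSup _ hmemE
        refine ⟨0, ?_⟩
        rintro y ⟨x, hx, rfl⟩
        rw [hD] at hx
        simp only [hinner]
        linarith [hx.1.1, hx.1.2.2]
      have hval : ⟪pt15 t, ω⟫ = -(3/2 * t) := by rw [hinner, pt15_apply1]
      have htle : t ≤ -b/3 := min_le_right _ _
      rw [hval] at hle
      linarith
  · -- closure intersection
    ext x
    simp only [Set.mem_inter_iff, Set.mem_setOf_eq, Set.mem_singleton_iff]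
    constructor
    · rintro ⟨hcl, hline⟩
      have hx1 : x 1 = 0 := by
        have := hinner x
        rw [hline] at this
        linarith [this.symm]
      -- closure D ⊆ closed cone
      have hcone : x ∈ {y : EuclideanSpace ℝ (Fin 2) | y 0 ≤ y 1 ∧ 0 ≤ y 0} := by
        have hsub : D ⊆ {y : EuclideanSpace ℝ (Fin 2) | y 0 ≤ y 1 ∧ 0 ≤ y 0} := by
          rw [hD]
          rintro y ⟨⟨h1, _, h3⟩, _⟩
          exact ⟨h1.le, h3.le⟩
        have hclosed : IsClosed {y : EuclideanSpace ℝ (Fin 2) | y 0 ≤ y 1 ∧ 0 ≤ y 0} := by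
          apply IsClosed.inter
          · exact isClosed_le (PiLp.continuous_apply 2 _ 0) (PiLp.continuous_apply 2 _ 1)
          · exact isClosed_le continuous_const (PiLp.continuous_apply 2 _ 0)
        exact hclosed.closure_subset_iff.mpr hsub hcl
      have hx0 : x 0 = 0 := le_antisymm (hx1 ▸ hcone.1) hcone.2
      ext i
      fin_cases i <;> simp [hx0, hx1]
    · rintro rfl
      refine ⟨?_, by rw [hinner]; simp⟩
      rw [Metric.mem_closure_iff]
      intro ε hε
      set t : ℝ := min (1/4) (ε/3) with htdef
      have ht0 : 0 < t := lt_min (by norm_num) (by linarith)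
      have ht2 : t < 1/2 := lt_of_le_of_lt (min_le_left _ _) (by norm_num)
      refine ⟨pt15 t, hmem t ht0 ht2, ?_⟩
      rw [dist_comm, dist_zero_right]
      have := pt15_norm_le t ht0.le
      have htle : t ≤ ε/3 := min_le_right _ _
      linarith
  · -- not a subgraph region
    intro δ hδ0 _ C hC l hl hEq
    set q : EuclideanSpace ℝ (Fin 2) := (WithLp.equiv 2 (Fin 2 → ℝ)).symm ![0, δ/2] with hq
    have hq0 : q 0 = 0 := rfl
    have hq1 : q 1 = δ/2 := rfl
    have hl0 : l 0 = 0 := by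
      have := hl 0
      simp only [abs_zero, mul_zero] at this
      linarith [this.1, this.2]
    have hqS : q ∈ {y : EuclideanSpace ℝ (Fin 2) | |y 0| < δ ∧ l (y 0) < y 1 ∧ y 1 < δ} := by
      refine ⟨?_, ?_, ?_⟩ <;> simp only [hq0, hq1, hl0, abs_zero] <;> linarith
    rw [← hEq, hD] at hqS
    exact absurd hqS.1.2.2 (by rw [hq0]; exact lt_irrefl 0)
end

section
/- Let B ⊆ ℝ³ be an open ball and let a be a point on its boundary sphere. Then ∫_B ‖x − y‖^{−4} dx tends to +∞ as y → a (y ∈ ℝ³). Consequently, if D ⊆ ℝ³ is a bounded open set containing B with a ∈ ∂D, then, since for k > 0 the gradient of G_y(x) = e^{ik‖x−y‖}/(4π‖x−y‖) satisfies ‖∇_x G_y(x)‖² = (1 + k²‖x−y‖²)/(16π²‖x−y‖⁴) ≥ 1/(16π²‖x−y‖⁴), one has ∫_D ‖∇_x G_y(x)‖² dx → +∞ as y → a. -/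
open MeasureTheory Filter
open scoped ENNReal RealInnerProductSpace

lemma aux17_lintegral_top (z : EuclideanSpace ℝ (Fin 3)) (r : ℝ) (hr : 0 < r)
    (a : EuclideanSpace ℝ (Fin 3)) (ha : a ∈ Metric.sphere z r) :
    ∫⁻ x in Metric.ball z r, ENNReal.ofReal (1 / ‖x - a‖ ^ 4) = ⊤ := by
  set V := volume (Metric.ball (0 : EuclideanSpace ℝ (Fin 3)) 1) with hVdef
  have hza : ‖z - a‖ = r := by
    have h := Metric.mem_sphere.mp ha
    rw [dist_comm] at h
    simpa [dist_eq_norm] using h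
  set s : ℕ → ℝ := fun n => r / 2 ^ (n + 1) with hsdef
  have hspos : ∀ n, 0 < s n := fun n => by positivity
  have hsle : ∀ n, s n ≤ r / 2 := by
    intro n
    have h2 : (2 : ℝ) ≤ 2 ^ (n + 1) := by
      calc (2:ℝ) = 2 ^ 1 := (pow_one 2).symm
        _ ≤ 2 ^ (n + 1) := by
            apply pow_le_pow_right₀ one_le_two; omega
    exact div_le_div_of_nonneg_left hr.le two_pos h2
  have hshalf : ∀ n m, n < m → s m ≤ s n / 2 := by
    intro n m hnm
    have h2 : (2:ℝ) ^ (n + 2) ≤ 2 ^ (m + 1) := by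
      apply pow_le_pow_right₀ one_le_two; omega
    have : s n / 2 = r / 2 ^ (n + 2) := by
      simp only [hsdef]; rw [div_div]; ring_nf
    rw [this]
    exact div_le_div_of_nonneg_left hr.le (by positivity) h2
  set m : ℕ → EuclideanSpace ℝ (Fin 3) := fun n => a + (s n / r) • (z - a) with hmdef
  have hma : ∀ n, dist (m n) a = s n := by
    intro n
    have : m n - a = (s n / r) • (z - a) := by simp [hmdef]
    rw [dist_eq_norm, this, norm_smul, hza, Real.norm_eq_abs,
      abs_of_pos (by positivity : (0:ℝ) < s n / r)]
    field_simp
  have hmz : ∀ n, dist (m n) z = r - s n := by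
    intro n
    have h1 : m n - z = (s n / r - 1) • (z - a) := by
      simp only [hmdef]; module
    have hc : s n / r ≤ 1 / 2 := by
      rw [div_le_div_iff₀ hr two_pos]
      have := hsle n; linarith
    rw [dist_eq_norm, h1, norm_smul, hza, Real.norm_eq_abs,
      abs_of_neg (by linarith : s n / r - 1 < 0)]
    field_simp; ring
  have hmm : ∀ n j, dist (m n) (m j) = |s n - s j| := by
    intro n j
    have h1 : m n - m j = ((s n - s j) / r) • (z - a) := by
      simp only [hmdef]
      rw [sub_div]
      module
    rw [dist_eq_norm, h1, norm_smul, hza, Real.norm_eq_abs, abs_div,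
      abs_of_pos hr]
    field_simp
  -- disjointness
  have hdisj : Pairwise (Function.onFun Disjoint fun n => Metric.ball (m n) (s n / 4)) := by
    have key : ∀ n j, n < j → s n / 4 + s j / 4 ≤ dist (m n) (m j) := by
      intro n j hnj
      rw [hmm n j]
      have h1 := hshalf n j hnj
      have h2 := hspos j
      have h3 := hspos n
      rw [abs_of_pos (by linarith : (0:ℝ) < s n - s j)]
      linarith
    intro n j hnj
    rcases lt_or_gt_of_ne hnj with h | h
    · exact Metric.ball_disjoint_ball (key n j h)
    · exact (Metric.ball_disjoint_ball (key j n h)).symm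
  have hsub : (⋃ n, Metric.ball (m n) (s n / 4)) ⊆ Metric.ball z r := by
    refine Set.iUnion_subset fun n => Metric.ball_subset_ball' ?_
    rw [hmz n]
    have := hspos n; linarith
  have hfm : Measurable fun x : EuclideanSpace ℝ (Fin 3) => ENNReal.ofReal (1 / ‖x - a‖ ^ 4) := by
    apply ENNReal.measurable_ofReal.comp
    exact measurable_const.div (((continuous_id.sub continuous_const).norm.pow 4).measurable)
  have hterm : ∀ n, ENNReal.ofReal (1 / (1024 * r)) * V ≤
      ∫⁻ x in Metric.ball (m n) (s n / 4), ENNReal.ofReal (1 / ‖x - a‖ ^ 4) := by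
    intro n
    have hsn := hspos n
    have hball : volume (Metric.ball (m n) (s n / 4)) = ENNReal.ofReal ((s n / 4) ^ 3) * V := by
      rw [Measure.addHaar_ball volume (m n) (by positivity : (0:ℝ) ≤ s n / 4), ← hVdef]
      norm_num [finrank_euclideanSpace_fin]
    calc ENNReal.ofReal (1 / (1024 * r)) * V
        ≤ ENNReal.ofReal (1 / (2 * s n) ^ 4 * (s n / 4) ^ 3) * V := by
          gcongr
          have h1 : (1 : ℝ) / (2 * s n) ^ 4 * (s n / 4) ^ 3 = 1 / (1024 * s n) := by
            field_simp; ring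
          rw [h1]
          apply one_div_le_one_div_of_le (by positivity)
          have := hsle n; nlinarith
      _ = ENNReal.ofReal (1 / (2 * s n) ^ 4) * volume (Metric.ball (m n) (s n / 4)) := by
          rw [hball, ENNReal.ofReal_mul (by positivity), mul_assoc]
      _ = ∫⁻ _ in Metric.ball (m n) (s n / 4), ENNReal.ofReal (1 / (2 * s n) ^ 4) := by
          rw [setLIntegral_const]
      _ ≤ ∫⁻ x in Metric.ball (m n) (s n / 4), ENNReal.ofReal (1 / ‖x - a‖ ^ 4) := by
          apply setLIntegral_mono hfm
          intro x hx
          apply ENNReal.ofReal_le_ofReal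
          have hd1 : dist x (m n) < s n / 4 := Metric.mem_ball.mp hx
          have hd2 : dist x a ≤ 2 * s n := by
            calc dist x a ≤ dist x (m n) + dist (m n) a := dist_triangle _ _ _
              _ ≤ s n / 4 + s n := by rw [hma n]; linarith
              _ ≤ 2 * s n := by linarith
          have hd3 : 0 < dist x a := by
            have : dist (m n) a ≤ dist (m n) x + dist x a := dist_triangle _ _ _
            rw [hma n, dist_comm (m n) x] at this
            linarith
          apply one_div_le_one_div_of_le (by positivity)
          rw [← dist_eq_norm]
          calc dist x a ^ 4 ≤ (2 * s n) ^ 4 := by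
                apply pow_le_pow_left₀ hd3.le hd2
            _ = (2 * s n) ^ 4 := rfl
  have hVne : V ≠ 0 := (Metric.measure_ball_pos volume 0 one_pos).ne'
  have hcne : ENNReal.ofReal (1 / (1024 * r)) * V ≠ 0 :=
    mul_ne_zero (ENNReal.ofReal_pos.mpr (by positivity)).ne' hVne
  refine top_unique ?_
  calc (⊤ : ℝ≥0∞) = ∑' _ : ℕ, ENNReal.ofReal (1 / (1024 * r)) * V :=
        (ENNReal.tsum_const_eq_top_of_ne_zero hcne).symm
    _ ≤ ∑' n, ∫⁻ x in Metric.ball (m n) (s n / 4), ENNReal.ofReal (1 / ‖x - a‖ ^ 4) :=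
        ENNReal.tsum_le_tsum hterm
    _ = ∫⁻ x in ⋃ n, Metric.ball (m n) (s n / 4), ENNReal.ofReal (1 / ‖x - a‖ ^ 4) :=
        (lintegral_iUnion (fun _ => measurableSet_ball) hdisj _).symm
    _ ≤ ∫⁻ x in Metric.ball z r, ENNReal.ofReal (1 / ‖x - a‖ ^ 4) :=
        lintegral_mono_set hsub

lemma aux17_tendsto (μ : Measure (EuclideanSpace ℝ (Fin 3)))
    (F : EuclideanSpace ℝ (Fin 3) → EuclideanSpace ℝ (Fin 3) → ℝ≥0∞)
    (a : EuclideanSpace ℝ (Fin 3))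
    (hmeas : ∀ y, Measurable (F y))
    (hcont : ∀ x, x ≠ a → ContinuousAt (fun y => F y x) a)
    (hμa : μ {a} = 0)
    (htop : ∫⁻ x, F a x ∂μ = ⊤) :
    Tendsto (fun y => ∫⁻ x, F y x ∂μ) (nhds a) (nhds ⊤) := by
  rw [Filter.tendsto_iff_seq_tendsto]
  intro u hu
  have hlim : (⊤ : ℝ≥0∞) ≤ liminf (fun n => ∫⁻ x, F (u n) x ∂μ) atTop := by
    have h1 : ∫⁻ x, F a x ∂μ ≤ ∫⁻ x, liminf (fun n => F (u n) x) atTop ∂μ := by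
      apply lintegral_mono_ae
      have h0 : ∀ᵐ x ∂μ, x ≠ a := by
        rw [ae_iff]
        convert hμa using 2
        ext x; simp
      filter_upwards [h0] with x hx
      have ht : Tendsto (fun n => F (u n) x) atTop (nhds (F a x)) :=
        ((hcont x hx).tendsto).comp hu
      exact ht.liminf_eq.ge
    calc (⊤ : ℝ≥0∞) = ∫⁻ x, F a x ∂μ := htop.symm
      _ ≤ ∫⁻ x, liminf (fun n => F (u n) x) atTop ∂μ := h1
      _ ≤ liminf (fun n => ∫⁻ x, F (u n) x ∂μ) atTop :=
          lintegral_liminf_le fun n => hmeas (u n)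
  apply ENNReal.tendsto_nhds_top
  intro n
  exact Filter.eventually_lt_of_lt_liminf (lt_of_lt_of_le (ENNReal.natCast_lt_top n) hlim)
    (by isBoundedDefault)

/-- Blow-up at a boundary point with an interior ball: if B = B(z,r) ⊆ ℝ³ and a lies on the
boundary sphere of B, then ∫_B ‖x-y‖^{-4} dx → ∞ as y → a; consequently, for a bounded open
D ⊇ B with a ∈ ∂D, the squared-gradient integral
∫_D (1 + k²‖x-y‖²)/(16π²‖x-y‖⁴) dx = ∫_D ‖∇G_y‖² dx also tends to ∞ as y → a. -/
theorem stmt_17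
    (z : EuclideanSpace ℝ (Fin 3)) (r : ℝ) (hr : 0 < r)
    (a : EuclideanSpace ℝ (Fin 3)) (ha : a ∈ Metric.sphere z r)
    (k : ℝ) (hk : 0 < k)
    (D : Set (EuclideanSpace ℝ (Fin 3))) (hDopen : IsOpen D)
    (hDbdd : Bornology.IsBounded D) (hBD : Metric.ball z r ⊆ D) (haD : a ∈ frontier D) :
    Tendsto (fun y : EuclideanSpace ℝ (Fin 3) =>
        ∫⁻ x in Metric.ball z r, ENNReal.ofReal (1 / ‖x - y‖ ^ 4)) (nhds a) (nhds ⊤) ∧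
    Tendsto (fun y : EuclideanSpace ℝ (Fin 3) =>
        ∫⁻ x in D, ENNReal.ofReal
          ((1 + k ^ 2 * ‖x - y‖ ^ 2) / (16 * Real.pi ^ 2 * ‖x - y‖ ^ 4)))
      (nhds a) (nhds ⊤) := by
  have hmeas1 : ∀ y : EuclideanSpace ℝ (Fin 3),
      Measurable fun x : EuclideanSpace ℝ (Fin 3) => ENNReal.ofReal (1 / ‖x - y‖ ^ 4) := by
    intro y
    exact ENNReal.measurable_ofReal.comp
      (measurable_const.div (((continuous_id.sub continuous_const).norm.pow 4).measurable))
  have hmeas2 : ∀ y : EuclideanSpace ℝ (Fin 3),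
      Measurable fun x : EuclideanSpace ℝ (Fin 3) =>
        ENNReal.ofReal ((1 + k ^ 2 * ‖x - y‖ ^ 2) / (16 * Real.pi ^ 2 * ‖x - y‖ ^ 4)) := by
    intro y
    apply ENNReal.measurable_ofReal.comp
    have hn : Measurable fun x : EuclideanSpace ℝ (Fin 3) => ‖x - y‖ :=
      (continuous_id.sub continuous_const).norm.measurable
    exact (measurable_const.add (measurable_const.mul (hn.pow_const 2))).div
      (measurable_const.mul (hn.pow_const 4))
  have hsing : ∀ S : Set (EuclideanSpace ℝ (Fin 3)), (volume.restrict S) {a} = 0 := by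
    intro S
    refine le_antisymm (le_trans (Measure.restrict_apply_le _ _) ?_) (by simp)
    simp [measure_singleton]
  have hcomp : ∀ y x : EuclideanSpace ℝ (Fin 3),
      ENNReal.ofReal (1 / (16 * Real.pi ^ 2)) * ENNReal.ofReal (1 / ‖x - y‖ ^ 4) ≤
      ENNReal.ofReal ((1 + k ^ 2 * ‖x - y‖ ^ 2) / (16 * Real.pi ^ 2 * ‖x - y‖ ^ 4)) := by
    intro y x
    rw [← ENNReal.ofReal_mul (by positivity)]
    apply ENNReal.ofReal_le_ofReal
    rcases eq_or_ne (‖x - y‖) 0 with h | h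
    · simp [h]
    · have hpos : 0 < ‖x - y‖ := (norm_nonneg _).lt_of_ne' h
      have heq : (1 : ℝ) / (16 * Real.pi ^ 2) * (1 / ‖x - y‖ ^ 4)
          = 1 / (16 * Real.pi ^ 2 * ‖x - y‖ ^ 4) := by
        rw [div_mul_div_comm, one_mul]
      rw [heq]
      gcongr
      nlinarith [sq_nonneg (k * ‖x - y‖)]
  constructor
  · exact aux17_tendsto (volume.restrict (Metric.ball z r)) _ a hmeas1
      (fun x hx => by
        have hne : ‖x - a‖ ^ 4 ≠ 0 :=
          pow_ne_zero _ (norm_ne_zero_iff.mpr (sub_ne_zero.mpr hx))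
        exact ENNReal.continuous_ofReal.continuousAt.comp
          (ContinuousAt.div continuousAt_const
            (((continuous_const.sub continuous_id).norm.pow 4).continuousAt) hne))
      (hsing _) (aux17_lintegral_top z r hr a ha)
  · refine aux17_tendsto (volume.restrict D) _ a hmeas2
      (fun x hx => ?_) (hsing _) ?_
    · have hne : 16 * Real.pi ^ 2 * ‖x - a‖ ^ 4 ≠ 0 := by
        have : ‖x - a‖ ≠ 0 := norm_ne_zero_iff.mpr (sub_ne_zero.mpr hx)
        positivity
      have hn : Continuous fun y : EuclideanSpace ℝ (Fin 3) => ‖x - y‖ :=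
        (continuous_const.sub continuous_id).norm
      exact ENNReal.continuous_ofReal.continuousAt.comp
        (ContinuousAt.div
          ((continuous_const.add (continuous_const.mul (hn.pow 2))).continuousAt)
          ((continuous_const.mul (hn.pow 4)).continuousAt) hne)
    · refine top_unique ?_
      calc (⊤ : ℝ≥0∞)
          = ENNReal.ofReal (1 / (16 * Real.pi ^ 2)) *
              ∫⁻ x in Metric.ball z r, ENNReal.ofReal (1 / ‖x - a‖ ^ 4) := by
            rw [aux17_lintegral_top z r hr a ha,
              ENNReal.mul_top (ENNReal.ofReal_pos.mpr (by positivity)).ne']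
        _ = ∫⁻ x in Metric.ball z r,
              ENNReal.ofReal (1 / (16 * Real.pi ^ 2)) * ENNReal.ofReal (1 / ‖x - a‖ ^ 4) :=
            (lintegral_const_mul _ (hmeas1 a)).symm
        _ ≤ ∫⁻ x in Metric.ball z r,
              ENNReal.ofReal ((1 + k ^ 2 * ‖x - a‖ ^ 2) / (16 * Real.pi ^ 2 * ‖x - a‖ ^ 4)) :=
            lintegral_mono fun x => hcomp a x
        _ ≤ ∫⁻ x in D,
              ENNReal.ofReal ((1 + k ^ 2 * ‖x - a‖ ^ 2) / (16 * Real.pi ^ 2 * ‖x - a‖ ^ 4)) :=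
            lintegral_mono_set hBD
end
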